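/- arXiv:2302.14559 — 4 statements merged into one kernel-verified Lean document; each statement's English description precedes it below -/
import Mathlib

section
/- Let Φ(N,n) be weights satisfying ∑_{n∈ℤ} Φ(N,n) = 1 with finite support in n for each N, let ϑ > 0, and set C(t) = limsup_{N→+∞} N^ϑ |∑_{n∈ℤ} Φ(N,n) e^{2πint}| for t ∈ ℝ. Then for every integrable function f on 𝕋^d, every m ∈ ℤ^d \ {0} and every α ∈ 𝕋^d, limsup_{N→+∞} { N^ϑ sup_{x∈𝕋^d} |D_N^{Φ,α} f(x)| } ≥ C(m·α) |f̂(m)|. -/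
open MeasureTheory Filter Finset
open scoped Real ENNReal Topology BigOperators

noncomputable section

/-- Distance from a real number to the nearest integer. -/
def dnint (t : ℝ) : ℝ := |t - (round t : ℝ)|

/-- Euclidean norm of an integer vector. -/
def znorm {d : ℕ} (m : Fin d → ℤ) : ℝ := Real.sqrt (∑ i, ((m i : ℝ)) ^ 2)

/-- A function on `ℝ^d` which is `ℤ^d`-periodic (i.e. a function on the torus `𝕋^d`). -/
def ZdPeriodic {d : ℕ} (f : (Fin d → ℝ) → ℂ) : Prop :=
  ∀ (x : Fin d → ℝ) (k : Fin d → ℤ), f (x + fun i => (k i : ℝ)) = f x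

/-- The unit cube, a fundamental domain of the torus `𝕋^d`. -/
def cube (d : ℕ) : Set (Fin d → ℝ) := Set.Icc 0 1

/-- Fourier coefficient of a (periodic) function. -/
def fcoef {d : ℕ} (f : (Fin d → ℝ) → ℂ) (m : Fin d → ℤ) : ℂ :=
  ∫ x in cube d,
    f x * Complex.exp (-(2 * Real.pi * Complex.I * ((∑ i, (m i : ℝ) * x i : ℝ) : ℂ)))

/-- Membership in the Sobolev space `W^{δ,2}(𝕋^d)`. -/
def MemSobolev {d : ℕ} (δ : ℝ) (f : (Fin d → ℝ) → ℂ) : Prop :=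
  Summable (fun m : Fin d → ℤ => (1 + znorm m ^ 2) ^ δ * ‖fcoef f m‖ ^ 2)

/-- The Sobolev norm `‖f‖_{δ,2}`. -/
def sobNorm {d : ℕ} (δ : ℝ) (f : (Fin d → ℝ) → ℂ) : ℝ :=
  Real.sqrt (∑' m : Fin d → ℤ, (1 + znorm m ^ 2) ^ δ * ‖fcoef f m‖ ^ 2)

/-- The kernel `∑_{n ∈ ℤ} Φ(N,n) e^{2πint}` of the summation method. -/
def kern (Φ : ℕ → ℤ → ℂ) (N : ℕ) (t : ℝ) : ℂ :=
  ∑' n : ℤ, Φ N n * Complex.exp (2 * Real.pi * Complex.I * (n : ℂ) * (t : ℂ))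

/-- The weighted discrepancy `D_N^{Φ,α} f(x)`. -/
def disc {d : ℕ} (Φ : ℕ → ℤ → ℂ) (α : Fin d → ℝ) (f : (Fin d → ℝ) → ℂ)
    (N : ℕ) (x : Fin d → ℝ) : ℂ :=
  (∑' n : ℤ, Φ N n * f (x + n • α)) - ∫ y in cube d, f y

/-- `α ∈ ℝ^d` is an irrational vector: `1, α₁, …, α_d` are linearly independent over `ℚ`. -/
def IrrationalVec {d : ℕ} (α : Fin d → ℝ) : Prop :=
  ∀ (m : Fin d → ℤ) (k : ℤ), (∑ i, (m i : ℝ) * α i) + (k : ℝ) = 0 → m = 0 ∧ k = 0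


open scoped Pointwise

variable {d : ℕ}

lemma span_mem (g : Fin d → ℝ)
    (hg : g ∈ Submodule.span ℤ (Set.range (Pi.basisFun ℝ (Fin d)))) :
    ∃ k : Fin d → ℤ, g = fun i => (k i : ℝ) := by
  rw [Submodule.mem_span_range_iff_exists_fun] at hg
  obtain ⟨c, hc⟩ := hg
  refine ⟨c, ?_⟩
  funext j
  rw [← hc]
  simp [Pi.basisFun_apply, Finset.sum_apply, Pi.single_apply]

lemma cube_ae_fd :
    (ZSpan.fundamentalDomain (Pi.basisFun ℝ (Fin d)) : Set (Fin d → ℝ)) =ᵐ[volume] cube d := by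
  have h1 : (ZSpan.fundamentalDomain (Pi.basisFun ℝ (Fin d)) : Set (Fin d → ℝ))
      = Set.pi Set.univ (fun _ : Fin d => Set.Ico (0:ℝ) 1) := by
    ext x
    simp [ZSpan.fundamentalDomain, Pi.basisFun_repr]
  rw [h1]
  have := MeasureTheory.Measure.univ_pi_Ico_ae_eq_Icc
    (μ := fun _ : Fin d => (volume : Measure ℝ)) (f := fun _ => (0:ℝ)) (g := fun _ => (1:ℝ))
  exact this

lemma shift_aux {f : (Fin d → ℝ) → ℂ} (hper : ZdPeriodic f) (a : Fin d → ℝ) :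
    ((∫ x in cube d, f (x + a)) = ∫ x in cube d, f x) ∧
    (IntegrableOn f (cube d) volume → IntegrableOn (fun x => f (x + a)) (cube d) volume) := by
  set b := Pi.basisFun ℝ (Fin d) with hb
  set L := Submodule.span ℤ (Set.range ⇑b) with hL
  set F := ZSpan.fundamentalDomain b with hF
  haveI : VAddCommClass (Fin d → ℝ) (↥L) (Fin d → ℝ) := ⟨fun a g x => by
    change a + ((g : Fin d → ℝ) + x) = (g : Fin d → ℝ) + (a + x)
    module⟩
  have hFD : IsAddFundamentalDomain (↥L) F volume := ZSpan.isAddFundamentalDomain b volume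
  have hFD2 : IsAddFundamentalDomain (↥L) (a +ᵥ F) volume := hFD.vadd_of_comm a
  have hinv : ∀ (g : ↥L) (x : Fin d → ℝ), f (g +ᵥ x) = f x := by
    intro g x
    obtain ⟨k, hk⟩ := span_mem g.1 g.2
    have h2 : (g : Fin d → ℝ) + x = x + fun i => (k i : ℝ) := by rw [hk]; abel
    show f ((g : Fin d → ℝ) + x) = f x
    rw [h2]; exact hper x k
  have hmp : MeasurePreserving (fun x : Fin d → ℝ => a + x) volume volume :=
    measurePreserving_add_left volume a
  have hemb : MeasurableEmbedding (fun x : Fin d → ℝ => a + x) :=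
    (MeasurableEquiv.addLeft a).measurableEmbedding
  haveI : MeasurableVAdd (↥L) (Fin d → ℝ) := by
    refine MeasurableVAdd.mk (toMeasurableConstVAdd := ⟨fun g => ?_⟩) (fun x => ?_)
    · change Measurable fun x : Fin d → ℝ => (g : Fin d → ℝ) + x
      exact measurable_const_add _
    · change Measurable fun g : ↥L => (g : Fin d → ℝ) + x
      exact measurable_subtype_coe.add measurable_const
  haveI : VAddInvariantMeasure (↥L) (Fin d → ℝ) volume := ⟨fun g s hs => by
    change volume ((fun x : Fin d → ℝ => (g : Fin d → ℝ) + x) ⁻¹' s) = volume s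
    exact (measurePreserving_add_left volume (g : Fin d → ℝ)).measure_preimage hs.nullMeasurableSet⟩
  have himg : (fun x : Fin d → ℝ => a + x) '' F = a +ᵥ F := by
    rw [show (fun x : Fin d → ℝ => a + x) = (a +ᵥ ·) from rfl]; exact Set.image_vadd
  constructor
  · calc ∫ x in cube d, f (x + a)
        = ∫ x in F, f (x + a) := (setIntegral_congr_set cube_ae_fd).symm
      _ = ∫ x in F, f (a + x) := by congr 1; ext x; rw [add_comm]
      _ = ∫ y in (fun x : Fin d → ℝ => a + x) '' F, f y :=
          (hmp.setIntegral_image_emb hemb f F).symm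
      _ = ∫ y in a +ᵥ F, f y := by rw [himg]
      _ = ∫ y in F, f y := hFD2.setIntegral_eq hFD hinv
      _ = ∫ y in cube d, f y := setIntegral_congr_set cube_ae_fd
  · intro hint
    have h1 : IntegrableOn f F volume := hint.congr_set_ae cube_ae_fd
    have h2 : IntegrableOn f (a +ᵥ F) volume := (hFD2.integrableOn_iff hFD hinv).mpr h1
    have h3 : Integrable (f ∘ (fun x : Fin d → ℝ => a + x)) (volume.restrict F) := by
      rw [(hmp.restrict_image_emb hemb F).integrable_comp_emb hemb, himg]
      exact h2
    have h4 : IntegrableOn (fun x => f (x + a)) F volume := by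
      have : (fun x : Fin d → ℝ => f (x + a)) = f ∘ (fun x : Fin d → ℝ => a + x) := by
        ext x; simp [add_comm]
      rw [this]; exact h3
    exact h4.congr_set_ae cube_ae_fd.symm

lemma norm_E_eq_one (r : ℝ) : ‖Complex.exp (-(2 * (π:ℝ) * Complex.I * (r:ℂ)))‖ = 1 := by
  rw [Complex.norm_exp]
  norm_num [Complex.mul_re, Complex.mul_im]

lemma exp_int_eq_one (n : ℤ) : Complex.exp (-(2 * (π:ℝ) * Complex.I * (n:ℂ))) = 1 := by
  rw [show -(2 * (π:ℝ) * Complex.I * (n:ℂ)) = ((-n : ℤ) : ℂ) * (2 * (π:ℝ) * Complex.I) by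
    push_cast; ring]
  exact Complex.exp_int_mul_two_pi_mul_I (-n)

lemma integral_cube_exp {m : Fin d → ℤ} (hm : m ≠ 0) :
    (∫ x in cube d,
      Complex.exp (-(2 * (π:ℝ) * Complex.I * ((∑ i, (m i : ℝ) * x i : ℝ) : ℂ)))) = 0 := by
  classical
  set g : Fin d → ℝ → ℂ := fun i t =>
    Complex.exp ((-(2 * (π:ℝ) * Complex.I * (m i : ℂ))) * (t : ℂ)) with hg
  have key : ∀ x : Fin d → ℝ,
      Complex.exp (-(2 * (π:ℝ) * Complex.I * ((∑ i, (m i : ℝ) * x i : ℝ) : ℂ)))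
        = ∏ i, g i (x i) := by
    intro x
    rw [hg, ← Complex.exp_sum]
    congr 1
    push_cast
    rw [Finset.mul_sum, ← Finset.sum_neg_distrib]
    exact Finset.sum_congr rfl fun i _ => by ring
  have hcube : cube d = Set.pi Set.univ (fun _ : Fin d => Set.Icc (0:ℝ) 1) := by
    rw [cube, ← Set.pi_univ_Icc]; rfl
  have hind : ∀ x : Fin d → ℝ,
      Set.indicator (cube d) (fun x => ∏ i, g i (x i)) x
        = ∏ i, Set.indicator (Set.Icc (0:ℝ) 1) (g i) (x i) := by
    intro x
    by_cases hx : x ∈ cube d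
    · rw [Set.indicator_of_mem hx]
      refine Finset.prod_congr rfl fun i _ => ?_
      rw [hcube] at hx
      rw [Set.indicator_of_mem (hx i (Set.mem_univ i))]
    · rw [Set.indicator_of_notMem hx]
      rw [hcube] at hx
      simp only [Set.mem_pi, Set.mem_univ, forall_true_left, not_forall] at hx
      obtain ⟨i, hi⟩ := hx
      refine (Finset.prod_eq_zero (Finset.mem_univ i) ?_).symm
      rw [Set.indicator_of_notMem (by simpa using hi)]
  calc (∫ x in cube d,
        Complex.exp (-(2 * (π:ℝ) * Complex.I * ((∑ i, (m i : ℝ) * x i : ℝ) : ℂ))))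
      = ∫ x in cube d, ∏ i, g i (x i) := by
        refine setIntegral_congr_fun measurableSet_Icc fun x _ => key x
    _ = ∫ x : Fin d → ℝ, Set.indicator (cube d) (fun x => ∏ i, g i (x i)) x :=
        (integral_indicator measurableSet_Icc).symm
    _ = ∫ x : Fin d → ℝ, ∏ i, Set.indicator (Set.Icc (0:ℝ) 1) (g i) (x i) := by
        exact integral_congr_ae (Filter.Eventually.of_forall hind)
    _ = ∏ i, ∫ t : ℝ, Set.indicator (Set.Icc (0:ℝ) 1) (g i) t :=
        integral_fintype_prod_eq_prod (fun i => Set.indicator (Set.Icc (0:ℝ) 1) (g i))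
    _ = ∏ i, ∫ t in Set.Icc (0:ℝ) 1, g i t := by
        exact Finset.prod_congr rfl fun i _ => integral_indicator measurableSet_Icc
    _ = 0 := by
        obtain ⟨i0, hi0⟩ : ∃ i, m i ≠ 0 := by
          by_contra h
          push_neg at h
          exact hm (funext fun i => h i)
        refine Finset.prod_eq_zero (Finset.mem_univ i0) ?_
        have hc : (-(2 * (π:ℝ) * Complex.I * (m i0 : ℂ))) ≠ 0 := by
          simp [Real.pi_ne_zero, Complex.I_ne_zero, Complex.ofReal_ne_zero, hi0]
        rw [hg]
        rw [← setIntegral_congr_set Ioc_ae_eq_Icc,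
          ← intervalIntegral.integral_of_le (zero_le_one' ℝ),
          integral_exp_mul_complex hc]
        rw [show (-(2 * (π:ℝ) * Complex.I * (m i0 : ℂ))) * (1:ℝ)
            = -(2 * (π:ℝ) * Complex.I * (m i0 : ℂ)) by push_cast; ring]
        rw [exp_int_eq_one]
        norm_num

/-- The character `E_m x`. -/
def Em {d : ℕ} (m : Fin d → ℤ) (x : Fin d → ℝ) : ℂ :=
  Complex.exp (-(2 * (π:ℝ) * Complex.I * ((∑ i, (m i : ℝ) * x i : ℝ) : ℂ)))

lemma Em_add (m : Fin d → ℤ) (x y : Fin d → ℝ) :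
    Em m (x + y) = Em m x * Em m y := by
  rw [Em, Em, Em, ← Complex.exp_add]
  congr 1
  have : (∑ i, (m i : ℝ) * (x + y) i) = (∑ i, (m i : ℝ) * x i) + ∑ i, (m i : ℝ) * y i := by
    rw [← Finset.sum_add_distrib]
    exact Finset.sum_congr rfl fun i _ => by simp [mul_add]
  rw [this]
  push_cast
  ring

lemma Em_continuous (m : Fin d → ℤ) : Continuous (Em m) := by
  unfold Em
  fun_prop

lemma Em_norm (m : Fin d → ℤ) (x : Fin d → ℝ) : ‖Em m x‖ = 1 := norm_E_eq_one _

lemma mulEm_periodic {f : (Fin d → ℝ) → ℂ} (hper : ZdPeriodic f) (m : Fin d → ℤ) :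
    ZdPeriodic (fun y => f y * Em m y) := by
  intro x k
  simp only
  rw [hper x k, Em_add]
  have : (∑ i, (m i : ℝ) * (fun i => (k i : ℝ)) i) = ((∑ i, m i * k i : ℤ) : ℝ) := by
    push_cast; rfl
  rw [show Em m (fun i => (k i : ℝ))
      = Complex.exp (-(2 * (π:ℝ) * Complex.I * ((∑ i, m i * k i : ℤ) : ℂ))) by
    rw [Em, this]; norm_num]
  rw [exp_int_eq_one, mul_one]

lemma mulEm_integrable {f : (Fin d → ℝ) → ℂ} (hint : IntegrableOn f (cube d) volume)
    (m : Fin d → ℤ) : IntegrableOn (fun y => f y * Em m y) (cube d) volume := by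
  have := hint.bdd_mul ((Em_continuous m).aestronglyMeasurable) (Filter.Eventually.of_forall fun x => (Em_norm m x).le)
  exact this.congr (Filter.Eventually.of_forall fun x => mul_comm _ _)

lemma fcoef_shift {f : (Fin d → ℝ) → ℂ} (hper : ZdPeriodic f)
    (m : Fin d → ℤ) (a : Fin d → ℝ) :
    (∫ x in cube d, f (x + a) * Em m x)
      = Complex.exp (2 * (π:ℝ) * Complex.I * ((∑ i, (m i : ℝ) * a i : ℝ) : ℂ)) * fcoef f m := by
  set g : (Fin d → ℝ) → ℂ := fun y => f y * Em m y with hgdef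
  have h1 : ∀ x, f (x + a) * Em m x
      = Complex.exp (2 * (π:ℝ) * Complex.I * ((∑ i, (m i : ℝ) * a i : ℝ) : ℂ)) * g (x + a) := by
    intro x
    have h2 : Complex.exp (2 * (π:ℝ) * Complex.I * ((∑ i, (m i : ℝ) * a i : ℝ) : ℂ)) * Em m a
        = 1 := by
      rw [Em, ← Complex.exp_add]
      rw [show 2 * (π:ℝ) * Complex.I * ((∑ i, (m i : ℝ) * a i : ℝ) : ℂ) +
          -(2 * (π:ℝ) * Complex.I * ((∑ i, (m i : ℝ) * a i : ℝ) : ℂ)) = 0 by ring]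
      exact Complex.exp_zero
    rw [hgdef]
    simp only
    rw [Em_add]
    rw [show Complex.exp (2 * (π:ℝ) * Complex.I * ((∑ i, (m i : ℝ) * a i : ℝ) : ℂ)) *
        (f (x + a) * (Em m x * Em m a)) = f (x + a) * Em m x *
        (Complex.exp (2 * (π:ℝ) * Complex.I * ((∑ i, (m i : ℝ) * a i : ℝ) : ℂ)) * Em m a) by ring]
    rw [h2, mul_one]
  calc (∫ x in cube d, f (x + a) * Em m x)
      = ∫ x in cube d,
          Complex.exp (2 * (π:ℝ) * Complex.I * ((∑ i, (m i : ℝ) * a i : ℝ) : ℂ)) * g (x + a) := by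
        exact setIntegral_congr_fun measurableSet_Icc fun x _ => h1 x
    _ = Complex.exp (2 * (π:ℝ) * Complex.I * ((∑ i, (m i : ℝ) * a i : ℝ) : ℂ))
          * ∫ x in cube d, g (x + a) := integral_const_mul _ _
    _ = _ := by
        rw [(shift_aux (mulEm_periodic hper m) a).1]
        rfl

lemma integral_cube_Em {m : Fin d → ℤ} (hm : m ≠ 0) :
    (∫ x in cube d, Em m x) = 0 := integral_cube_exp hm

lemma fcoef_disc (Φ : ℕ → ℤ → ℂ) (N : ℕ) (hsupp : (Function.support (Φ N)).Finite)
    {f : (Fin d → ℝ) → ℂ} (hper : ZdPeriodic f) (hint : IntegrableOn f (cube d) volume)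
    {m : Fin d → ℤ} (hm : m ≠ 0) (α : Fin d → ℝ) :
    fcoef (disc Φ α f N) m = kern Φ N (∑ i, (m i : ℝ) * α i) * fcoef f m := by
  classical
  set s := hsupp.toFinset with hs
  set S := ∑ i, (m i : ℝ) * α i with hS
  set I₀ := ∫ y in cube d, f y with hI₀
  have hΦ : ∀ n : ℤ, n ∉ s → Φ N n = 0 := fun n hn => by
    simpa [hs, Set.Finite.mem_toFinset, Function.mem_support, not_not] using hn
  have hts : ∀ x : Fin d → ℝ,
      (∑' n : ℤ, Φ N n * f (x + n • α)) = ∑ n ∈ s, Φ N n * f (x + n • α) := fun x =>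
    tsum_eq_sum (fun n hn => by rw [hΦ n hn, zero_mul])
  have hkern : kern Φ N S
      = ∑ n ∈ s, Φ N n * Complex.exp (2 * Real.pi * Complex.I * (n : ℂ) * (S : ℂ)) :=
    tsum_eq_sum (fun n hn => by rw [hΦ n hn, zero_mul])
  have hA : ∀ n ∈ s, IntegrableOn (fun x => Φ N n * (f (x + n • α) * Em m x)) (cube d) volume :=
    fun n _ => (mulEm_integrable ((shift_aux hper (n • α)).2 hint) m).const_mul (Φ N n)
  have hB : IntegrableOn (fun x => I₀ * Em m x) (cube d) volume :=
    (((Em_continuous m).continuousOn).integrableOn_compact isCompact_Icc).const_mul I₀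
  have hone : ∀ n : ℤ, (∫ x in cube d, Φ N n * (f (x + n • α) * Em m x))
      = Φ N n * (Complex.exp (2 * Real.pi * Complex.I * (n : ℂ) * (S : ℂ)) * fcoef f m) := by
    intro n
    rw [integral_const_mul, fcoef_shift hper m (n • α)]
    congr 3
    have h2 : (∑ i, (m i : ℝ) * (n • α) i) = (n : ℝ) * S := by
      rw [hS, Finset.mul_sum]
      refine Finset.sum_congr rfl fun i _ => ?_
      simp only [Pi.smul_apply, zsmul_eq_mul]
      ring
    rw [h2]
    push_cast
    ring
  calc fcoef (disc Φ α f N) m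
      = ∫ x in cube d,
          ((∑ n ∈ s, Φ N n * (f (x + n • α) * Em m x)) - I₀ * Em m x) := by
        refine setIntegral_congr_fun measurableSet_Icc fun x _ => ?_
        show disc Φ α f N x * Em m x = _
        rw [disc, hts x, sub_mul, Finset.sum_mul]
        congr 1
        exact Finset.sum_congr rfl fun n _ => by rw [mul_assoc]
    _ = (∑ n ∈ s, ∫ x in cube d, Φ N n * (f (x + n • α) * Em m x))
          - ∫ x in cube d, I₀ * Em m x := by
        rw [integral_sub (integrable_finset_sum s hA) hB, integral_finset_sum s hA]
    _ = (∑ n ∈ s, Φ N n * (Complex.exp (2 * Real.pi * Complex.I * (n : ℂ) * (S : ℂ))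
          * fcoef f m)) - 0 := by
        rw [integral_const_mul, integral_cube_Em hm, mul_zero]
        exact congrArg (· - 0) (Finset.sum_congr rfl fun n _ => hone n)
    _ = kern Φ N S * fcoef f m := by
        rw [sub_zero, hkern, Finset.sum_mul]
        exact Finset.sum_congr rfl fun n _ => by ring

lemma fcoef_le_sup (g : (Fin d → ℝ) → ℂ) (m : Fin d → ℤ) :
    ENNReal.ofReal ‖fcoef g m‖ ≤ ⨆ x : Fin d → ℝ, (‖g x‖₊ : ℝ≥0∞) := by
  rw [ofReal_norm]
  have hrfl : fcoef g m = ∫ x in cube d, g x * Em m x := rfl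
  calc (‖fcoef g m‖₊ : ℝ≥0∞)
      ≤ ∫⁻ x in cube d, ‖g x * Em m x‖₊ ∂volume := by
        rw [hrfl]; exact enorm_integral_le_lintegral_enorm _
    _ ≤ ∫⁻ _x in cube d, (⨆ y : Fin d → ℝ, (‖g y‖₊ : ℝ≥0∞)) ∂volume := by
        refine lintegral_mono fun x => ?_
        have he : (‖Em m x‖₊ : ℝ) = 1 := Em_norm m x
        have he' : ‖Em m x‖₊ = 1 := by exact_mod_cast he
        rw [nnnorm_mul, he', mul_one]
        exact le_iSup (fun y : Fin d → ℝ => (‖g y‖₊ : ℝ≥0∞)) x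
    _ = (⨆ y : Fin d → ℝ, (‖g y‖₊ : ℝ≥0∞)) * volume (cube d) := setLIntegral_const _ _
    _ = ⨆ y : Fin d → ℝ, (‖g y‖₊ : ℝ≥0∞) := by
        rw [cube, Real.volume_Icc_pi]
        simp


/-- Theorem 1.3: the speed of convergence `N^{-ϑ}` cannot be accelerated; lower bound
via `C(m·α)|f̂(m)|`, where `C(t) = limsup_N N^ϑ |∑_n Φ(N,n)e^{2πint}|`. -/
theorem stmt_2 (d : ℕ) (hd : 0 < d) (Φ : ℕ → ℤ → ℂ)
    (hsupp : ∀ N : ℕ, 1 ≤ N → (Function.support (Φ N)).Finite)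
    (hsum : ∀ N : ℕ, 1 ≤ N → ∑' n : ℤ, Φ N n = 1)
    (ϑ : ℝ) (hϑ : 0 < ϑ)
    (f : (Fin d → ℝ) → ℂ) (hper : ZdPeriodic f)
    (hint : IntegrableOn f (cube d) volume)
    (m : Fin d → ℤ) (hm : m ≠ 0) (α : Fin d → ℝ) :
    (Filter.limsup (fun N : ℕ =>
        ENNReal.ofReal ((N : ℝ) ^ ϑ * ‖kern Φ N (∑ i, (m i : ℝ) * α i)‖)) Filter.atTop)
      * ENNReal.ofReal ‖fcoef f m‖
    ≤ Filter.limsup (fun N : ℕ =>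
        ENNReal.ofReal ((N : ℝ) ^ ϑ) *
          ⨆ x : Fin d → ℝ, (‖disc Φ α f N x‖₊ : ℝ≥0∞)) Filter.atTop := by
  set S := ∑ i, (m i : ℝ) * α i with hS
  set c := ENNReal.ofReal ‖fcoef f m‖ with hc
  have hkey : ∀ N : ℕ, 1 ≤ N →
      c * ENNReal.ofReal ((N : ℝ) ^ ϑ * ‖kern Φ N S‖)
        ≤ ENNReal.ofReal ((N : ℝ) ^ ϑ) * ⨆ x : Fin d → ℝ, (‖disc Φ α f N x‖₊ : ℝ≥0∞) := by
    intro N hN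
    have hpow : (0:ℝ) ≤ (N : ℝ) ^ ϑ := Real.rpow_nonneg (Nat.cast_nonneg N) ϑ
    have h1 : c * ENNReal.ofReal ((N : ℝ) ^ ϑ * ‖kern Φ N S‖)
        = ENNReal.ofReal ((N : ℝ) ^ ϑ) * ENNReal.ofReal (‖kern Φ N S‖ * ‖fcoef f m‖) := by
      rw [hc, ENNReal.ofReal_mul hpow, ENNReal.ofReal_mul (norm_nonneg _)]
      ring
    rw [h1]
    refine mul_le_mul_right ?_ _
    rw [← norm_mul, ← fcoef_disc Φ N (hsupp N hN) hper hint hm α]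
    exact fcoef_le_sup _ m
  calc (Filter.limsup (fun N : ℕ =>
        ENNReal.ofReal ((N : ℝ) ^ ϑ * ‖kern Φ N S‖)) Filter.atTop) * c
      = Filter.limsup (fun N : ℕ =>
          c * ENNReal.ofReal ((N : ℝ) ^ ϑ * ‖kern Φ N S‖)) Filter.atTop := by
        rw [ENNReal.limsup_const_mul_of_ne_top ENNReal.ofReal_ne_top, mul_comm]
    _ ≤ _ := Filter.limsup_le_limsup (Filter.eventually_atTop.mpr ⟨1, hkey⟩)
end
end

section
/- Consider the arithmetic-mean weights Φ(N,n) = 1/(2N+1) if |n| ≤ N and Φ(N,n) = 0 otherwise. Then: (1) there exists K > 0 such that for every positive integer N and every t ∈ ℝ, |(2N+1)^{−1} ∑_{n=−N}^{N} e^{2πint}| = |sin((2N+1)πt)/((2N+1)sin(πt))| ≤ K(1 + N‖t‖)^{−1}; and (2) for every nonconstant integrable function f on 𝕋^d and every α ∈ ℝ^d, there is no positive integer N such that simultaneously ∫_{𝕋^d} |N^{−1}∑_{n=1}^{N} f(x+nα) − ∫_{𝕋^d} f(y)dy| dx < (2N)^{−1} ∫_{𝕋^d} |f(x) − ∫_{𝕋^d}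 f(y)dy| dx and ∫_{𝕋^d} |(N+1)^{−1}∑_{n=1}^{N+1} f(x+nα) − ∫_{𝕋^d} f(y)dy| dx < (2(N+1))^{−1} ∫_{𝕋^d} |f(x) − ∫_{𝕋^d} f(y)dy| dx; in particular the speed of convergence of the arithmetic means is never faster than cN^{−1}. -/
open MeasureTheory Filter Finset
open scoped Real ENNReal Topology BigOperators

noncomputable section

variable {d : ℕ}

abbrev latt (d : ℕ) := Submodule.span ℤ (Set.range (Pi.basisFun ℝ (Fin d)))
abbrev stdFD (d : ℕ) := ZSpan.fundamentalDomain (Pi.basisFun ℝ (Fin d))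

lemma fd_std (d : ℕ) : IsAddFundamentalDomain (latt d) (stdFD d) volume :=
  ZSpan.isAddFundamentalDomain _ _

lemma latt_coords (γ : latt d) : ∃ k : Fin d → ℤ, (γ : Fin d → ℝ) = fun i => (k i : ℝ) := by
  have h := fun i => ((Pi.basisFun ℝ (Fin d)).mem_span_iff_repr_mem ℤ (γ : Fin d → ℝ)).mp γ.2 i
  choose k hk using h
  exact ⟨k, funext fun i => by simpa [Pi.basisFun_repr] using (hk i).symm⟩

lemma periodic_vadd {E : Type*} {f : (Fin d → ℝ) → E}
    (hf : ∀ (x : Fin d → ℝ) (k : Fin d → ℤ), f (x + fun i => (k i : ℝ)) = f x)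
    (γ : latt d) (x : Fin d → ℝ) : f (γ +ᵥ x) = f x := by
  obtain ⟨k, hk⟩ := latt_coords γ
  have : γ +ᵥ x = x + fun i => (k i : ℝ) := by
    show (γ : Fin d → ℝ) + x = _
    rw [hk, add_comm]
  rw [this, hf]

lemma fd_translate (v : Fin d → ℝ) :
    IsAddFundamentalDomain (latt d) ((fun x => x + v) ⁻¹' stdFD d) volume := by
  refine (fd_std d).preimage_of_equiv
    (measurePreserving_add_right volume v).quasiMeasurePreserving
    (e := id) Function.bijective_id (fun γ x => ?_)
  show ((γ : Fin d → ℝ) + x) + v = (γ : Fin d → ℝ) + (x + v)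
  abel

lemma stdFD_ae_cube (d : ℕ) : stdFD d =ᵐ[volume] (Set.Icc 0 1 : Set (Fin d → ℝ)) := by
  have h1 : stdFD d = Set.pi Set.univ (fun _ : Fin d => Set.Ico (0:ℝ) 1) := by
    ext x
    simp [ZSpan.fundamentalDomain, Pi.basisFun_repr, Set.mem_pi]
  have h2 : (Set.Icc 0 1 : Set (Fin d → ℝ)) = Set.pi Set.univ (fun _ : Fin d => Set.Icc (0:ℝ) 1) := by
    rw [Set.pi_univ_Icc]; rfl
  rw [h1, h2, Set.pi_univ_Icc]
  have := MeasureTheory.Measure.univ_pi_Ico_ae_eq_Icc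
    (μ := fun _ : Fin d => (volume : Measure ℝ)) (f := fun _ => (0:ℝ)) (g := fun _ => (1:ℝ))
  rw [show (volume : Measure (Fin d → ℝ)) = Measure.pi fun _ => volume from rfl]
  exact this

instance : MeasurableVAdd (latt d) (Fin d → ℝ) where
  measurable_const_vadd γ := by
    have : (fun x : Fin d → ℝ => γ +ᵥ x) = fun x => (γ : Fin d → ℝ) + x := rfl
    rw [this]; exact measurable_const_add _
  measurable_vadd_const x := by
    have : (fun γ : latt d => γ +ᵥ x) = (fun y : Fin d → ℝ => y + x) ∘ (fun γ : latt d => (γ : Fin d → ℝ)) := rfl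
    rw [this]; exact (measurable_add_const x).comp measurable_subtype_coe

instance : VAddInvariantMeasure (latt d) (Fin d → ℝ) volume :=
  ⟨fun γ s hs => by
    have : (fun x : Fin d → ℝ => γ +ᵥ x) ⁻¹' s = (fun x => (γ : Fin d → ℝ) + x) ⁻¹' s := rfl
    rw [this, measure_preimage_add]⟩

variable {E : Type*} [NormedAddCommGroup E] [NormedSpace ℝ E]

lemma key_integrableOn {f : (Fin d → ℝ) → E}
    (hper : ∀ (x : Fin d → ℝ) (k : Fin d → ℤ), f (x + fun i => (k i : ℝ)) = f x)
    (hf : IntegrableOn f (Set.Icc 0 1) volume) (v : Fin d → ℝ) :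
    IntegrableOn (fun x => f (x + v)) (Set.Icc 0 1) volume := by
  have hcube := Measure.restrict_congr_set (μ := (volume : Measure (Fin d → ℝ)))
    (stdFD_ae_cube d)
  have hfstd : IntegrableOn f (stdFD d) volume := by
    unfold IntegrableOn; rw [hcube]; exact hf
  have hper' : ∀ (γ : latt d) (x : Fin d → ℝ), (fun x => f (x + v)) (γ +ᵥ x)
      = (fun x => f (x + v)) x := by
    intro γ x
    exact periodic_vadd (f := fun x => f (x + v))
      (fun x k => by rw [show x + (fun i => (k i : ℝ)) + v
        = (x + v) + fun i => (k i : ℝ) by abel, hper]) γ x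
  have h1 : IntegrableOn (fun x => f (x + v)) (stdFD d) volume ↔
      IntegrableOn (fun x => f (x + v)) ((fun x => x + v) ⁻¹' stdFD d) volume :=
    (fd_std d).integrableOn_iff (fd_translate v) hper'
  have h2 : IntegrableOn ((fun y => f y) ∘ (fun x => x + v)) ((fun x => x + v) ⁻¹' stdFD d) volume
      ↔ IntegrableOn f (stdFD d) volume :=
    (measurePreserving_add_right volume v).integrableOn_comp_preimage
      (MeasurableEquiv.addRight v).measurableEmbedding
  unfold IntegrableOn
  rw [← hcube]
  exact h1.mpr (h2.mpr hfstd)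

lemma key_integral {f : (Fin d → ℝ) → E}
    (hper : ∀ (x : Fin d → ℝ) (k : Fin d → ℤ), f (x + fun i => (k i : ℝ)) = f x)
    (v : Fin d → ℝ) :
    ∫ x in (Set.Icc 0 1 : Set (Fin d → ℝ)), f (x + v) = ∫ x in (Set.Icc 0 1 : Set (Fin d → ℝ)), f x := by
  have hcube := Measure.restrict_congr_set (μ := (volume : Measure (Fin d → ℝ)))
    (stdFD_ae_cube d)
  have hper' : ∀ (γ : latt d) (x : Fin d → ℝ), (fun x => f (x + v)) (γ +ᵥ x)
      = (fun x => f (x + v)) x := by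
    intro γ x
    exact periodic_vadd (f := fun x => f (x + v))
      (fun x k => by rw [show x + (fun i => (k i : ℝ)) + v
        = (x + v) + fun i => (k i : ℝ) by abel, hper]) γ x
  have h1 : ∫ x in stdFD d, f (x + v) = ∫ x in (fun x => x + v) ⁻¹' stdFD d, f (x + v) :=
    (fd_std d).setIntegral_eq (fd_translate v) hper'
  have h2 : ∫ x in (fun x => x + v) ⁻¹' stdFD d, f (x + v) = ∫ x in stdFD d, f x :=
    (measurePreserving_add_right volume v).setIntegral_preimage_emb
      (MeasurableEquiv.addRight v).measurableEmbedding _ _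
  calc ∫ x in (Set.Icc 0 1 : Set (Fin d → ℝ)), f (x + v)
      = ∫ x in stdFD d, f (x + v) := by rw [← hcube]
    _ = ∫ x in stdFD d, f x := h1.trans h2
    _ = ∫ x in (Set.Icc 0 1 : Set (Fin d → ℝ)), f x := by rw [← hcube]

lemma part2 {d : ℕ} (f : (Fin d → ℝ) → ℂ) (hper : ZdPeriodic f)
    (hint : IntegrableOn f (Set.Icc 0 1) volume) (α : Fin d → ℝ) :
    ¬ ∃ N : ℕ, 1 ≤ N ∧
      (∫ x in (Set.Icc 0 1 : Set (Fin d → ℝ)), ‖(N : ℂ)⁻¹ * (∑ n ∈ Finset.Icc (1 : ℤ) (N : ℤ), f (x + n • α))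
            - ∫ y in (Set.Icc 0 1 : Set (Fin d → ℝ)), f y‖)
        < (2 * (N : ℝ))⁻¹ * ∫ x in (Set.Icc 0 1 : Set (Fin d → ℝ)), ‖f x - ∫ y in (Set.Icc 0 1 : Set (Fin d → ℝ)), f y‖ ∧
      (∫ x in (Set.Icc 0 1 : Set (Fin d → ℝ)), ‖((N : ℂ) + 1)⁻¹ *
            (∑ n ∈ Finset.Icc (1 : ℤ) ((N : ℤ) + 1), f (x + n • α))
            - ∫ y in (Set.Icc 0 1 : Set (Fin d → ℝ)), f y‖)
        < (2 * ((N : ℝ) + 1))⁻¹ * ∫ x in (Set.Icc 0 1 : Set (Fin d → ℝ)), ‖f x - ∫ y in (Set.Icc 0 1 : Set (Fin d → ℝ)), f y‖ := by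
  rintro ⟨N, hN1, h1, h2⟩
  set I : ℂ := ∫ y in (Set.Icc 0 1 : Set (Fin d → ℝ)), f y with hI
  set c : ℝ := ∫ x in (Set.Icc 0 1 : Set (Fin d → ℝ)), ‖f x - I‖ with hc
  set g : (Fin d → ℝ) → ℂ := fun x => f x - I with hg
  have hgper : ∀ (x : Fin d → ℝ) (k : Fin d → ℤ), g (x + fun i => (k i : ℝ)) = g x := by
    intro x k; simp only [hg, hper x k]
  have hvol : volume (Set.Icc (0 : Fin d → ℝ) 1) < ⊤ := isCompact_Icc.measure_lt_top
  have hgint : IntegrableOn g (Set.Icc 0 1) volume :=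
    hint.sub (integrableOn_const hvol.ne)
  -- translates of g are integrable with the same norm-integral
  have hTint : ∀ v : Fin d → ℝ, IntegrableOn (fun x => g (x + v)) (Set.Icc 0 1) volume :=
    fun v => key_integrableOn hgper hgint v
  have hTnorm : ∀ v : Fin d → ℝ,
      (∫ x in (Set.Icc 0 1 : Set (Fin d → ℝ)), ‖g (x + v)‖) = c := by
    intro v
    exact key_integral (f := fun x => ‖g x‖) (fun x k => by simp only [hgper x k]) v
  -- the partial sums
  set G : ℕ → (Fin d → ℝ) → ℂ :=
    fun M x => ∑ n ∈ Finset.Icc (1 : ℤ) (M : ℤ), g (x + n • α) with hG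
  have hGint : ∀ M : ℕ, IntegrableOn (G M) (Set.Icc 0 1) volume := by
    intro M
    exact MeasureTheory.integrable_finset_sum _ (fun n _ => hTint (n • α))
  have hGcard : ∀ M : ℕ, (Finset.Icc (1 : ℤ) (M : ℤ)).card = M := by
    intro M; rw [Int.card_Icc]; simp
  -- rewriting the discrepancy
  have keyM : ∀ M : ℕ, M ≠ 0 → ∀ x : Fin d → ℝ,
      (M : ℂ)⁻¹ * (∑ n ∈ Finset.Icc (1 : ℤ) (M : ℤ), f (x + n • α)) - I
        = (M : ℂ)⁻¹ * G M x := by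
    intro M hM x
    have hMne : (M : ℂ) ≠ 0 := Nat.cast_ne_zero.mpr hM
    have hGx : G M x = (∑ n ∈ Finset.Icc (1 : ℤ) (M : ℤ), f (x + n • α)) - (M : ℂ) * I := by
      simp only [hG, hg, Finset.sum_sub_distrib, Finset.sum_const, hGcard, nsmul_eq_mul]
    rw [hGx, mul_sub, ← mul_assoc, inv_mul_cancel₀ hMne, one_mul]
  have hbound : ∀ M : ℕ, M ≠ 0 →
      (∫ x in (Set.Icc 0 1 : Set (Fin d → ℝ)),
        ‖(M : ℂ)⁻¹ * (∑ n ∈ Finset.Icc (1 : ℤ) (M : ℤ), f (x + n • α)) - I‖)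
      = (M : ℝ)⁻¹ * ∫ x in (Set.Icc 0 1 : Set (Fin d → ℝ)), ‖G M x‖ := by
    intro M hM
    calc (∫ x in (Set.Icc 0 1 : Set (Fin d → ℝ)),
          ‖(M : ℂ)⁻¹ * (∑ n ∈ Finset.Icc (1 : ℤ) (M : ℤ), f (x + n • α)) - I‖)
        = ∫ x in (Set.Icc 0 1 : Set (Fin d → ℝ)), (M : ℝ)⁻¹ • ‖G M x‖ := by
          refine setIntegral_congr_fun measurableSet_Icc (fun x _ => ?_)
          rw [keyM M hM x, norm_mul, norm_inv, Complex.norm_natCast, smul_eq_mul]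
      _ = (M : ℝ)⁻¹ • ∫ x in (Set.Icc 0 1 : Set (Fin d → ℝ)), ‖G M x‖ := integral_smul _ _
      _ = (M : ℝ)⁻¹ * ∫ x in (Set.Icc 0 1 : Set (Fin d → ℝ)), ‖G M x‖ := smul_eq_mul _ _
  -- consequences of the hypotheses
  have hNne : N ≠ 0 := Nat.one_le_iff_ne_zero.mp hN1
  have hNpos : (0:ℝ) < N := by
    exact_mod_cast Nat.pos_of_ne_zero hNne
  set X : ℕ → ℝ := fun M => ∫ x in (Set.Icc 0 1 : Set (Fin d → ℝ)), ‖G M x‖ with hX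
  have e1 : X N < c / 2 := by
    rw [hbound N hNne] at h1
    calc X N = (N:ℝ) * ((N:ℝ)⁻¹ * X N) := by field_simp
      _ < (N:ℝ) * ((2 * (N:ℝ))⁻¹ * c) := by exact mul_lt_mul_of_pos_left h1 hNpos
      _ = c / 2 := by field_simp
  have e2 : X (N + 1) < c / 2 := by
    have hb2 := hbound (N + 1) (Nat.succ_ne_zero N)
    push_cast at hb2
    rw [hb2] at h2
    have hN1pos : (0:ℝ) < (N:ℝ) + 1 := by positivity
    calc X (N + 1) = ((N:ℝ) + 1) * (((N:ℝ) + 1)⁻¹ * X (N + 1)) := by field_simp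
      _ < ((N:ℝ) + 1) * ((2 * ((N:ℝ) + 1))⁻¹ * c) := by
          refine mul_lt_mul_of_pos_left ?_ hN1pos
          convert h2 using 3
      _ = c / 2 := by field_simp
  -- the splitting identity
  have hins : Finset.Icc (1:ℤ) (((N + 1 : ℕ)):ℤ) = insert ((N:ℤ)+1) (Finset.Icc (1:ℤ) (N:ℤ)) := by
    ext n; simp only [Finset.mem_Icc, Finset.mem_insert]; push_cast; omega
  have hnotmem : ((N:ℤ)+1) ∉ Finset.Icc (1:ℤ) (N:ℤ) := by
    simp only [Finset.mem_Icc]; omega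
  have hsplit : ∀ x : Fin d → ℝ, g (x + ((N:ℤ)+1) • α) = G (N+1) x - G N x := by
    intro x
    simp only [hG, hins, Finset.sum_insert hnotmem]
    ring
  have hfinal : c < c := by
    calc c = ∫ x in (Set.Icc 0 1 : Set (Fin d → ℝ)), ‖g (x + ((N:ℤ)+1) • α)‖ :=
          (hTnorm (((N:ℤ)+1) • α)).symm
      _ = ∫ x in (Set.Icc 0 1 : Set (Fin d → ℝ)), ‖G (N+1) x - G N x‖ := by
          refine setIntegral_congr_fun measurableSet_Icc (fun x _ => ?_)
          rw [hsplit x]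
      _ ≤ ∫ x in (Set.Icc 0 1 : Set (Fin d → ℝ)), (‖G (N+1) x‖ + ‖G N x‖) := by
          refine integral_mono ((hGint (N+1)).sub (hGint N)).norm
            ((hGint (N+1)).norm.add (hGint N).norm) (fun x => norm_sub_le _ _)
      _ = X (N+1) + X N := integral_add (hGint (N+1)).norm (hGint N).norm
      _ < c / 2 + c / 2 := add_lt_add e2 e1
      _ = c := by ring
  exact absurd hfinal (lt_irrefl c)


lemma dirichlet_id (t : ℝ) (N : ℕ) :
    (∑ n ∈ Finset.Icc (-(N : ℤ)) (N : ℤ),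
        Complex.exp (2 * Real.pi * Complex.I * (n : ℂ) * (t : ℂ)))
      * Complex.sin ((Real.pi : ℂ) * (t : ℂ))
    = Complex.sin ((2 * (N : ℂ) + 1) * (Real.pi : ℂ) * (t : ℂ)) := by
  induction N with
  | zero => simp
  | succ N ih =>
    have hins : Finset.Icc (-((N+1 : ℕ) : ℤ)) ((N+1 : ℕ) : ℤ)
        = insert (-((N:ℤ)+1)) (insert ((N:ℤ)+1) (Finset.Icc (-(N:ℤ)) (N:ℤ))) := by
      ext n
      simp only [Finset.mem_Icc, Finset.mem_insert]
      push_cast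
      omega
    have h1 : (-((N:ℤ)+1)) ∉ insert ((N:ℤ)+1) (Finset.Icc (-(N:ℤ)) (N:ℤ)) := by
      simp only [Finset.mem_insert, Finset.mem_Icc]; omega
    have h2 : ((N:ℤ)+1) ∉ Finset.Icc (-(N:ℤ)) (N:ℤ) := by
      simp only [Finset.mem_Icc]; omega
    rw [hins, Finset.sum_insert h1, Finset.sum_insert h2]
    set p : ℂ := (Real.pi : ℂ)
    set s : ℂ := (t : ℂ)
    set A : ℂ := 2 * ((N:ℂ) + 1) * p * s with hA
    have e1 : Complex.exp (2 * p * Complex.I * ((-((N:ℤ)+1) : ℤ) : ℂ) * s)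
        = Complex.cos (-A) + Complex.sin (-A) * Complex.I := by
      rw [← Complex.exp_mul_I]
      congr 1
      push_cast
      ring
    have e2 : Complex.exp (2 * p * Complex.I * ((((N:ℤ)+1) : ℤ) : ℂ) * s)
        = Complex.cos A + Complex.sin A * Complex.I := by
      rw [← Complex.exp_mul_I]
      congr 1
      push_cast
      ring
    rw [e1, e2, add_mul, add_mul, add_mul, ih]
    have hr1 : (2 * ((N:ℂ) + 1) + 1) * p * s = A + p * s := by rw [hA]; ring
    have hr2 : (2 * (N:ℂ) + 1) * p * s = A - p * s := by rw [hA]; ring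
    rw [show (2 * (((N:ℕ)+1 : ℕ) : ℂ) + 1) * p * s = A + p * s by push_cast; ring, hr2,
      Complex.sin_add, Complex.sin_sub, Complex.sin_neg, Complex.cos_neg]
    ring

lemma dirichlet_norm_eq (N : ℕ) (t : ℝ) (h : Real.sin (Real.pi * t) ≠ 0) :
    ‖((2 * (N : ℝ) + 1 : ℝ) : ℂ)⁻¹ *
        ∑ n ∈ Finset.Icc (-(N : ℤ)) (N : ℤ),
          Complex.exp (2 * Real.pi * Complex.I * (n : ℂ) * (t : ℂ))‖
      = |Real.sin ((2 * (N : ℝ) + 1) * Real.pi * t)| /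
          ((2 * (N : ℝ) + 1) * |Real.sin (Real.pi * t)|) := by
  have hb : ((Real.sin (Real.pi * t) : ℝ) : ℂ) ≠ 0 := by exact_mod_cast h
  have hid := dirichlet_id t N
  have ha1 : Complex.sin ((Real.pi : ℂ) * (t : ℂ)) = ((Real.sin (Real.pi * t) : ℝ) : ℂ) := by
    rw [Complex.ofReal_sin]; push_cast; ring_nf
  have ha2 : Complex.sin ((2 * (N : ℂ) + 1) * (Real.pi : ℂ) * (t : ℂ))
      = ((Real.sin ((2 * (N : ℝ) + 1) * Real.pi * t) : ℝ) : ℂ) := by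
    rw [Complex.ofReal_sin]; push_cast; ring_nf
  rw [ha1, ha2] at hid
  have hS : (∑ n ∈ Finset.Icc (-(N : ℤ)) (N : ℤ),
        Complex.exp (2 * Real.pi * Complex.I * (n : ℂ) * (t : ℂ)))
      = ((Real.sin ((2 * (N : ℝ) + 1) * Real.pi * t) : ℝ) : ℂ)
        / ((Real.sin (Real.pi * t) : ℝ) : ℂ) := by
    rw [eq_div_iff hb]; exact hid
  rw [hS, norm_mul, norm_inv, norm_div, Complex.norm_real, Complex.norm_real,
    Complex.norm_real, Real.norm_eq_abs, Real.norm_eq_abs, Real.norm_eq_abs]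
  have h2N : (0:ℝ) < 2 * (N:ℝ) + 1 := by positivity
  rw [abs_of_pos h2N]
  field_simp

lemma dirichlet_trivial (N : ℕ) (t : ℝ) :
    ‖((2 * (N : ℝ) + 1 : ℝ) : ℂ)⁻¹ *
        ∑ n ∈ Finset.Icc (-(N : ℤ)) (N : ℤ),
          Complex.exp (2 * Real.pi * Complex.I * (n : ℂ) * (t : ℂ))‖ ≤ 1 := by
  have hcard : (Finset.Icc (-(N : ℤ)) (N : ℤ)).card = 2 * N + 1 := by
    rw [Int.card_Icc]; omega
  have hsum : ‖∑ n ∈ Finset.Icc (-(N : ℤ)) (N : ℤ),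
      Complex.exp (2 * Real.pi * Complex.I * (n : ℂ) * (t : ℂ))‖ ≤ 2 * (N:ℝ) + 1 := by
    calc ‖∑ n ∈ Finset.Icc (-(N : ℤ)) (N : ℤ),
        Complex.exp (2 * Real.pi * Complex.I * (n : ℂ) * (t : ℂ))‖
        ≤ ∑ n ∈ Finset.Icc (-(N : ℤ)) (N : ℤ),
          ‖Complex.exp (2 * Real.pi * Complex.I * (n : ℂ) * (t : ℂ))‖ := norm_sum_le _ _
      _ = ∑ n ∈ Finset.Icc (-(N : ℤ)) (N : ℤ), 1 := by
          refine Finset.sum_congr rfl (fun n _ => ?_)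
          rw [Complex.norm_exp]
          have : (2 * (Real.pi:ℂ) * Complex.I * (n : ℂ) * (t : ℂ)).re = 0 := by
            simp [Complex.mul_re, Complex.mul_im]
          rw [this, Real.exp_zero]
      _ = 2 * (N:ℝ) + 1 := by rw [Finset.sum_const, hcard]; push_cast; ring
  have h2N : (0:ℝ) < 2 * (N:ℝ) + 1 := by positivity
  rw [norm_mul, norm_inv, Complex.norm_real, Real.norm_eq_abs, abs_of_pos h2N]
  rw [inv_mul_le_iff₀ h2N, mul_one]
  exact hsum

lemma sin_lower (t : ℝ) : 2 * |t - (round t : ℝ)| ≤ |Real.sin (Real.pi * t)| := by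
  set u : ℝ := t - (round t : ℝ) with hu
  have habs : |u| ≤ 1 / 2 := abs_sub_round t
  have hsin : |Real.sin (Real.pi * t)| = |Real.sin (Real.pi * u)| := by
    have : Real.pi * t = Real.pi * u + (round t : ℤ) * Real.pi := by rw [hu]; push_cast; ring
    rw [this, Real.sin_add_int_mul_pi, abs_mul]
    have hone : |((-1):ℝ) ^ (round t)| = 1 := by
      rcases Int.even_or_odd (round t) with he | ho
      · rw [he.neg_one_zpow, abs_one]
      · rw [ho.neg_one_zpow, abs_neg, abs_one]
    rw [hone, one_mul]
  have h1 : |Real.sin (Real.pi * u)| = Real.sin (Real.pi * |u|) := by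
    rcases abs_cases u with ⟨h, _⟩ | ⟨h, hneg⟩
    · rw [h, abs_of_nonneg]
      exact Real.sin_nonneg_of_nonneg_of_le_pi (by positivity)
        (by nlinarith [Real.pi_pos, habs, abs_nonneg u])
    · rw [h, mul_neg, Real.sin_neg, abs_of_nonpos]
      apply Real.sin_nonpos_of_nonpos_of_neg_pi_le
      · nlinarith [Real.pi_pos, habs, abs_nonneg u]
      · nlinarith [Real.pi_pos, abs_nonneg u]
  have h2 : 2 / Real.pi * (Real.pi * |u|) ≤ Real.sin (Real.pi * |u|) :=
    Real.mul_le_sin (by positivity)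
      (by nlinarith [Real.pi_pos, habs])
  rw [hsin, h1, show (2:ℝ) * |u| = 2 / Real.pi * (Real.pi * |u|) by field_simp]
  exact h2

lemma part1 :
    ∃ K : ℝ, 0 < K ∧ ∀ N : ℕ, 1 ≤ N → ∀ t : ℝ,
      (Real.sin (Real.pi * t) ≠ 0 →
        ‖((2 * (N : ℝ) + 1 : ℝ) : ℂ)⁻¹ *
            ∑ n ∈ Finset.Icc (-(N : ℤ)) (N : ℤ),
              Complex.exp (2 * Real.pi * Complex.I * (n : ℂ) * (t : ℂ))‖
          = |Real.sin ((2 * (N : ℝ) + 1) * Real.pi * t)| /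
              ((2 * (N : ℝ) + 1) * |Real.sin (Real.pi * t)|)) ∧
      ‖((2 * (N : ℝ) + 1 : ℝ) : ℂ)⁻¹ *
          ∑ n ∈ Finset.Icc (-(N : ℤ)) (N : ℤ),
            Complex.exp (2 * Real.pi * Complex.I * (n : ℂ) * (t : ℂ))‖
        ≤ K * (1 + (N : ℝ) * dnint t) ^ (-(1 : ℝ)) := by
  refine ⟨2, two_pos, fun N hN t => ⟨fun h => dirichlet_norm_eq N t h, ?_⟩⟩
  have hdn : dnint t = |t - (round t : ℝ)| := rfl
  rw [hdn]
  set x : ℝ := |t - (round t : ℝ)| with hx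
  have hx0 : 0 ≤ x := abs_nonneg _
  have hN0 : (0:ℝ) ≤ N := Nat.cast_nonneg N
  have hpos : (0:ℝ) < 1 + (N:ℝ) * x := by positivity
  rw [Real.rpow_neg hpos.le, Real.rpow_one]
  by_cases hcase : (N:ℝ) * x ≤ 1
  · have h1 : 1 + (N:ℝ) * x ≤ 2 := by linarith
    calc ‖((2 * (N : ℝ) + 1 : ℝ) : ℂ)⁻¹ *
          ∑ n ∈ Finset.Icc (-(N : ℤ)) (N : ℤ),
            Complex.exp (2 * Real.pi * Complex.I * (n : ℂ) * (t : ℂ))‖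
        ≤ 1 := dirichlet_trivial N t
      _ ≤ 2 * (1 + (N:ℝ) * x)⁻¹ := by
          rw [← div_eq_mul_inv, le_div_iff₀ hpos, one_mul]; exact h1
  · push_neg at hcase
    have hsl := sin_lower t
    have hxpos : 0 < x := by nlinarith
    have hsneq : Real.sin (Real.pi * t) ≠ 0 := by
      intro h0
      rw [h0, abs_zero] at hsl
      nlinarith
    rw [dirichlet_norm_eq N t hsneq]
    have hden : 2 * (1 + (N:ℝ) * x) ≤ (2 * (N:ℝ) + 1) * |Real.sin (Real.pi * t)| := by
      nlinarith [hsl, hcase, hx0, hN0]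
    have hnum : |Real.sin ((2 * (N : ℝ) + 1) * Real.pi * t)| ≤ 1 := abs_le.mpr
      ⟨Real.neg_one_le_sin _, Real.sin_le_one _⟩
    calc |Real.sin ((2 * (N : ℝ) + 1) * Real.pi * t)| /
          ((2 * (N : ℝ) + 1) * |Real.sin (Real.pi * t)|)
        ≤ 1 / (2 * (1 + (N:ℝ) * x)) :=
          div_le_div₀ zero_le_one hnum (by positivity) hden
      _ ≤ 2 * (1 + (N:ℝ) * x)⁻¹ := by
          rw [one_div, mul_inv]
          have hinv : 0 ≤ (1 + (N:ℝ) * x)⁻¹ := by positivity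
          nlinarith

/-- Corollary 1.8: arithmetic means. (1) The Dirichlet-kernel bound
`|(2N+1)^{-1} ∑_{|n|≤N} e^{2πint}| ≤ K(1+N‖t‖)^{-1}` together with the sine identity;
(2) the speed of convergence of arithmetic means is never faster than `cN^{-1}`. -/

theorem stmt_7 (d : ℕ) (hd : 0 < d) :
    (∃ K : ℝ, 0 < K ∧ ∀ N : ℕ, 1 ≤ N → ∀ t : ℝ,
      (Real.sin (Real.pi * t) ≠ 0 →
        ‖((2 * (N : ℝ) + 1 : ℝ) : ℂ)⁻¹ *
            ∑ n ∈ Finset.Icc (-(N : ℤ)) (N : ℤ),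
              Complex.exp (2 * Real.pi * Complex.I * (n : ℂ) * (t : ℂ))‖
          = |Real.sin ((2 * (N : ℝ) + 1) * Real.pi * t)| /
              ((2 * (N : ℝ) + 1) * |Real.sin (Real.pi * t)|)) ∧
      ‖((2 * (N : ℝ) + 1 : ℝ) : ℂ)⁻¹ *
          ∑ n ∈ Finset.Icc (-(N : ℤ)) (N : ℤ),
            Complex.exp (2 * Real.pi * Complex.I * (n : ℂ) * (t : ℂ))‖
        ≤ K * (1 + (N : ℝ) * dnint t) ^ (-(1 : ℝ)))
    ∧
    (∀ f : (Fin d → ℝ) → ℂ, ZdPeriodic f → IntegrableOn f (cube d) volume →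
      (¬ ∃ c : ℂ, ∀ x : Fin d → ℝ, f x = c) → ∀ α : Fin d → ℝ,
      ¬ ∃ N : ℕ, 1 ≤ N ∧
        (∫ x in cube d, ‖(N : ℂ)⁻¹ * (∑ n ∈ Finset.Icc (1 : ℤ) (N : ℤ), f (x + n • α))
              - ∫ y in cube d, f y‖)
          < (2 * (N : ℝ))⁻¹ * ∫ x in cube d, ‖f x - ∫ y in cube d, f y‖ ∧
        (∫ x in cube d, ‖((N : ℂ) + 1)⁻¹ *
              (∑ n ∈ Finset.Icc (1 : ℤ) ((N : ℤ) + 1), f (x + n • α))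
              - ∫ y in cube d, f y‖)
          < (2 * ((N : ℝ) + 1))⁻¹ * ∫ x in cube d, ‖f x - ∫ y in cube d, f y‖) := by
  constructor
  · exact part1
  · intro f hper hint _hnc α
    exact part2 f hper hint α
end
end

section
/- For every ϑ > 0 and every α ∈ ℝ^d, the series ∑_{m∈ℤ^d\{0}} |m|^{−dϑ} ‖m·α‖^{−ϑ} diverges, i.e. equals +∞. -/
open MeasureTheory Filter Finset
open scoped Real ENNReal Topology BigOperators

noncomputable section

lemma znorm_pos {d : ℕ} {m : Fin d → ℤ} (hm : m ≠ 0) : 0 < znorm m := by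
  have : ∃ i, m i ≠ 0 := by
    by_contra h; push_neg at h; exact hm (funext h)
  obtain ⟨i, hi⟩ := this
  apply Real.sqrt_pos.mpr
  have h1 : (0:ℝ) < ((m i : ℝ))^2 := by positivity
  exact lt_of_lt_of_le h1 (Finset.single_le_sum (f := fun j => ((m j : ℝ))^2)
    (fun j _ => by positivity) (mem_univ i))

lemma dnint_nonneg (t : ℝ) : 0 ≤ dnint t := abs_nonneg _

lemma dnint_le (t : ℝ) (k : ℤ) : dnint t ≤ |t - k| := round_le t k

lemma pigeon (d N : ℕ) (hd : 0 < d) (hN : 1 ≤ N) (α : Fin d → ℝ) :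
    ∃ q : Fin d → ℤ, q ≠ 0 ∧ (∀ i, |q i| ≤ (N : ℤ)) ∧
      dnint (∑ i, (q i : ℝ) * α i) ≤ 1 / (N : ℝ) ^ d := by
  set M : ℕ := (N + 1) ^ d with hM
  have hM2 : 2 ≤ M := Nat.one_lt_pow hd.ne' (by omega)
  have hMN : N ^ d + 1 ≤ M := Nat.pow_lt_pow_left (by omega) hd.ne'
  set L : (Fin d → Fin (N + 1)) → ℝ := fun m => ∑ i, ((m i : ℕ) : ℝ) * α i with hL
  set g : (Fin d → Fin (N + 1)) → ℤ := fun m => ⌊((M : ℝ) - 1) * Int.fract (L m)⌋ with hg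
  have hcpos : (0:ℝ) < (M : ℝ) - 1 := by
    have : (2:ℝ) ≤ M := by exact_mod_cast hM2
    linarith
  have hmaps : ∀ m ∈ (univ : Finset (Fin d → Fin (N+1))), g m ∈ Finset.Ico (0:ℤ) ((M:ℤ) - 1) := by
    intro m _
    rw [Finset.mem_Ico]
    constructor
    · apply Int.floor_nonneg.mpr
      exact mul_nonneg hcpos.le (Int.fract_nonneg _)
    · apply Int.floor_lt.mpr
      push_cast
      calc ((M : ℝ) - 1) * Int.fract (L m) < ((M:ℝ) - 1) * 1 := by
            exact mul_lt_mul_of_pos_left (Int.fract_lt_one _) hcpos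
        _ = (M:ℝ) - 1 := by ring
  have hcard : (Finset.Ico (0:ℤ) ((M:ℤ) - 1)).card < (univ : Finset (Fin d → Fin (N+1))).card := by
    rw [Int.card_Ico]
    simp [Fintype.card_fun]
    omega
  obtain ⟨a, _, b, _, hab, hgab⟩ := Finset.exists_ne_map_eq_of_card_lt_of_maps_to hcard hmaps
  refine ⟨fun i => (a i : ℤ) - (b i : ℤ), ?_, ?_, ?_⟩
  · intro h
    apply hab
    funext i
    have h2 : ((a i : ℕ) : ℤ) - ((b i : ℕ) : ℤ) = 0 := by simpa using congrFun h i
    have h3 : ((a i : ℕ) : ℤ) = ((b i : ℕ) : ℤ) := by omega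
    exact Fin.ext (by exact_mod_cast h3)
  · intro i
    have h1 : (a i : ℕ) ≤ N := Fin.is_le _
    have h2 : (b i : ℕ) ≤ N := Fin.is_le _
    show |(a i : ℤ) - (b i : ℤ)| ≤ (N : ℤ)
    rw [abs_le]
    omega
  · have hsum : ∑ i, (((a i : ℤ) - (b i : ℤ) : ℤ) : ℝ) * α i = L a - L b := by
      rw [hL, ← Finset.sum_sub_distrib]
      congr 1; funext i; push_cast; ring
    rw [hsum]
    have hfr : |Int.fract (L a) - Int.fract (L b)| ≤ 1 / ((M:ℝ) - 1) := by
      have h1 : ((M:ℝ) - 1) * Int.fract (L a) - ((M:ℝ) - 1) * Int.fract (L b)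
          = (((M:ℝ)-1) * Int.fract (L a) - (g a : ℝ)) - (((M:ℝ)-1) * Int.fract (L b) - (g b : ℝ)) := by
        rw [hgab]; ring
      have hA1 : (g a : ℝ) ≤ ((M:ℝ)-1) * Int.fract (L a) := Int.floor_le _
      have hA2 : ((M:ℝ)-1) * Int.fract (L a) < (g a : ℝ) + 1 := Int.lt_floor_add_one _
      have hB1 : (g b : ℝ) ≤ ((M:ℝ)-1) * Int.fract (L b) := Int.floor_le _
      have hB2 : ((M:ℝ)-1) * Int.fract (L b) < (g b : ℝ) + 1 := Int.lt_floor_add_one _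
      have habs : |((M:ℝ) - 1) * (Int.fract (L a) - Int.fract (L b))| ≤ 1 := by
        rw [mul_sub, abs_le]
        constructor <;> nlinarith
      rw [abs_mul, abs_of_pos hcpos] at habs
      rw [le_div_iff₀ hcpos]
      linarith [abs_nonneg (Int.fract (L a) - Int.fract (L b))]
    have key : dnint (L a - L b) ≤ 1 / ((M:ℝ) - 1) := by
      refine le_trans (dnint_le _ (⌊L a⌋ - ⌊L b⌋)) ?_
      have : L a - L b - ((⌊L a⌋ - ⌊L b⌋ : ℤ) : ℝ) = Int.fract (L a) - Int.fract (L b) := by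
        rw [Int.fract, Int.fract]; push_cast; ring
      rw [this]; exact hfr
    refine le_trans key ?_
    apply one_div_le_one_div_of_le
    · positivity
    · have : ((N ^ d + 1 : ℕ) : ℝ) ≤ (M : ℝ) := by exact_mod_cast hMN
      push_cast at this
      linarith


set_option maxHeartbeats 1000000

/-- Lemma 2.6 (i): for every `ϑ > 0` and every `α ∈ ℝ^d` the series
`∑_{m ≠ 0} |m|^{-dϑ}‖m·α‖^{-ϑ}` diverges (terms with `‖m·α‖ = 0` count as `+∞`). -/
theorem stmt_14 (d : ℕ) (hd : 0 < d) (ϑ : ℝ) (hϑ : 0 < ϑ) (α : Fin d → ℝ) :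
    ∑' m : {m : Fin d → ℤ // m ≠ 0},
      (ENNReal.ofReal (znorm m.1)) ^ (-((d : ℝ) * ϑ)) *
        (ENNReal.ofReal (dnint (∑ i, (m.1 i : ℝ) * α i))) ^ (-ϑ) = ⊤ := by
  by_cases hA : ∀ m : Fin d → ℤ, m ≠ 0 → dnint (∑ i, (m i : ℝ) * α i) ≠ 0
  case neg =>
    push_neg at hA
    obtain ⟨m, hm, h0⟩ := hA
    apply ENNReal.tsum_eq_top_of_eq_top
    refine ⟨⟨m, hm⟩, ?_⟩
    rw [h0, ENNReal.ofReal_zero, ENNReal.zero_rpow_of_neg (by linarith)]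
    have hx : 0 < (ENNReal.ofReal (znorm m)) ^ (-((d : ℝ) * ϑ)) :=
      ENNReal.rpow_pos (ENNReal.ofReal_pos.mpr (znorm_pos hm)) ENNReal.ofReal_ne_top
    exact ENNReal.mul_top hx.ne'
  case pos =>
    by_contra htop
    have hd1 : (1:ℝ) ≤ (d:ℝ) := by exact_mod_cast hd
    set c : ℝ≥0∞ := ENNReal.ofReal ((d:ℝ) ^ (-((d:ℝ)*ϑ))) with hc
    have hcpos : (0:ℝ) < (d:ℝ) ^ (-((d:ℝ)*ϑ)) := Real.rpow_pos_of_pos (by linarith) _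
    have hc0 : c ≠ 0 := by
      rw [hc]
      exact (ENNReal.ofReal_pos.mpr hcpos).ne'
    have hfin := ENNReal.finite_const_le_of_tsum_ne_top htop hc0
    have key : ∀ N : ℕ, 1 ≤ N → ∃ m : {m : Fin d → ℤ // m ≠ 0},
        c ≤ (ENNReal.ofReal (znorm m.1)) ^ (-((d : ℝ) * ϑ)) *
          (ENNReal.ofReal (dnint (∑ i, (m.1 i : ℝ) * α i))) ^ (-ϑ) ∧
        dnint (∑ i, (m.1 i : ℝ) * α i) ≤ 1 / (N:ℝ)^d := by
      intro N hN
      have hNpos : (0:ℝ) < (N:ℝ) := by exact_mod_cast hN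
      obtain ⟨q, hq0, hqb, hqd⟩ := pigeon d N hd hN α
      refine ⟨⟨q, hq0⟩, ?_, hqd⟩
      have hεpos : 0 < dnint (∑ i, (q i : ℝ) * α i) :=
        lt_of_le_of_ne (dnint_nonneg _) (Ne.symm (hA q hq0))
      have hzpos : 0 < znorm q := znorm_pos hq0
      have hzb : znorm q ≤ (d:ℝ) * N := by
        have h1 : ∑ i, ((q i : ℝ))^2 ≤ ((d:ℝ)*N)^2 := by
          calc ∑ i, ((q i:ℝ))^2 ≤ ∑ _i : Fin d, ((N:ℝ))^2 := by
                apply Finset.sum_le_sum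
                intro i _
                have h2 : ((|q i| : ℤ) : ℝ) ≤ (N:ℝ) := by exact_mod_cast hqb i
                rw [Int.cast_abs] at h2
                calc ((q i:ℝ))^2 = |(q i:ℝ)|^2 := (sq_abs _).symm
                  _ ≤ (N:ℝ)^2 := by nlinarith [abs_nonneg ((q i : ℝ))]
            _ = (d:ℝ) * (N:ℝ)^2 := by simp
            _ ≤ ((d:ℝ)*N)^2 := by nlinarith
        calc znorm q ≤ Real.sqrt (((d:ℝ)*N)^2) := Real.sqrt_le_sqrt h1
          _ = (d:ℝ)*N := Real.sqrt_sq (by positivity)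
      rw [ENNReal.ofReal_rpow_of_pos hzpos, ENNReal.ofReal_rpow_of_pos hεpos,
          ← ENNReal.ofReal_mul (Real.rpow_nonneg hzpos.le _)]
      apply ENNReal.ofReal_le_ofReal
      have h2 : ((d:ℝ)*N) ^ (-((d:ℝ)*ϑ)) ≤ znorm q ^ (-((d:ℝ)*ϑ)) :=
        Real.rpow_le_rpow_of_nonpos hzpos hzb (by nlinarith)
      have h3 : (1/(N:ℝ)^d) ^ (-ϑ) ≤ (dnint (∑ i, (q i : ℝ) * α i)) ^ (-ϑ) :=
        Real.rpow_le_rpow_of_nonpos hεpos hqd (by linarith)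
      have h4 : ((d:ℝ)*N) ^ (-((d:ℝ)*ϑ)) * (1/(N:ℝ)^d) ^ (-ϑ) = (d:ℝ) ^ (-((d:ℝ)*ϑ)) := by
        have hstep : (1/(N:ℝ)^d) = (N:ℝ) ^ (-(d:ℝ)) := by
          rw [Real.rpow_neg hNpos.le, Real.rpow_natCast, one_div]
        rw [hstep, Real.mul_rpow (by positivity) hNpos.le,
            ← Real.rpow_mul hNpos.le, mul_assoc, ← Real.rpow_add hNpos]
        have : -((d:ℝ)*ϑ) + -(d:ℝ) * -ϑ = 0 := by ring
        rw [this, Real.rpow_zero, mul_one]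
      calc (d:ℝ) ^ (-((d:ℝ)*ϑ)) = ((d:ℝ)*N) ^ (-((d:ℝ)*ϑ)) * (1/(N:ℝ)^d) ^ (-ϑ) := h4.symm
        _ ≤ znorm q ^ (-((d:ℝ)*ϑ)) * (dnint (∑ i, (q i : ℝ) * α i)) ^ (-ϑ) :=
            mul_le_mul h2 h3 (Real.rpow_nonneg (by positivity) _) (Real.rpow_nonneg hzpos.le _)
    obtain ⟨m₁, hm₁, _⟩ := key 1 le_rfl
    have hne : hfin.toFinset.Nonempty := ⟨m₁, by rw [Set.Finite.mem_toFinset]; exact hm₁⟩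
    obtain ⟨mb, hmb, hmin⟩ := Finset.exists_min_image hfin.toFinset
      (fun m => dnint (∑ i, (m.1 i : ℝ) * α i)) hne
    set μ := dnint (∑ i, (mb.1 i : ℝ) * α i) with hμ
    have hμpos : 0 < μ :=
      lt_of_le_of_ne (dnint_nonneg _) (Ne.symm (hA mb.1 mb.2))
    set N : ℕ := ⌈1/μ⌉₊ + 1 with hNdef
    have hN1 : 1 ≤ N := by omega
    have hNpos : (0:ℝ) < (N:ℝ) := by exact_mod_cast hN1
    obtain ⟨m, hm, hmd⟩ := key N hN1
    have hmem : m ∈ hfin.toFinset := by rw [Set.Finite.mem_toFinset]; exact hm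
    have h5 : μ ≤ dnint (∑ i, (m.1 i : ℝ) * α i) := hmin m hmem
    have h6 : 1/(N:ℝ) < μ := by
      have h7 : 1/μ < (N:ℝ) := by
        calc 1/μ ≤ (⌈1/μ⌉₊ : ℝ) := Nat.le_ceil _
          _ < (N:ℝ) := by exact_mod_cast Nat.lt_succ_self _
      rw [div_lt_iff₀ hNpos]
      calc (1:ℝ) = μ * (1/μ) := by field_simp
        _ < μ * N := mul_lt_mul_of_pos_left h7 hμpos
    have h8 : 1/(N:ℝ)^d ≤ 1/(N:ℝ) := by
      apply one_div_le_one_div_of_le hNpos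
      calc (N:ℝ) = (N:ℝ)^1 := (pow_one _).symm
        _ ≤ (N:ℝ)^d := pow_le_pow_right₀ (by exact_mod_cast hN1) hd
    linarith
end
end

section
/- Consider the logarithmic weights Φ(N,n) = (∑_{m=1}^{N} 1/m)^{−1} (1/n) for 1 ≤ n ≤ N and Φ(N,n) = 0 otherwise. If α ∈ ℝ^d is not a Liouville vector, i.e. there exist constants H > 0 and σ > 0 such that ‖α·m‖ ≥ H|m|^{−σ} for every m ∈ ℤ^d \ {0}, then there exists a constant c = c(d,H,σ) > 0 such that for every function f on 𝕋^d with ∑_{m∈ℤ^d} |f̂(m)| log(1+|m|) < ∞ and every positive integer N, sup_{x∈𝕋^d} |(∑_{n=1}^{N} 1/n)^{−1} ∑_{n=1}^{N} f(x+nα)/n − ∫_{𝕋^d} f(y) dy| ≤ c log^{−1}(1+N) ∑_{m∈ℤ^d} |f̂(m)| log(1+|m|). -/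
open MeasureTheory Filter Finset
open scoped Real ENNReal Topology BigOperators

noncomputable section

/-- The logarithmic discrepancy
`(∑_{n=1}^N 1/n)^{-1} ∑_{n=1}^N f(x+nα)/n − ∫_{𝕋^d} f`. -/
def logDisc {d : ℕ} (α : Fin d → ℝ) (f : (Fin d → ℝ) → ℂ) (N : ℕ) (x : Fin d → ℝ) : ℂ :=
  (((∑ n ∈ Finset.Icc 1 N, (1 : ℝ) / n) : ℝ) : ℂ)⁻¹ *
      (∑ n ∈ Finset.Icc 1 N, f (x + (n : ℤ) • α) / (n : ℂ))
    - ∫ y in cube d, f y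

/-- convenient exponential -/
def ee (t : ℝ) : ℂ := Complex.exp (2 * Real.pi * Complex.I * (t : ℂ))

lemma ee_norm (t : ℝ) : ‖ee t‖ = 1 := by
  have : (2 * Real.pi * Complex.I * (t : ℂ)) = ((2 * Real.pi * t : ℝ) : ℂ) * Complex.I := by
    push_cast; ring
  rw [ee, this]
  exact Complex.norm_exp_ofReal_mul_I _

lemma ee_add (s t : ℝ) : ee (s + t) = ee s * ee t := by
  rw [ee, ee, ee, ← Complex.exp_add]; push_cast; ring_nf

lemma ee_int (k : ℤ) : ee k = 1 := by
  rw [ee]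
  have : (2 * Real.pi * Complex.I * ((k : ℝ) : ℂ)) = (k : ℂ) * (2 * Real.pi * Complex.I) := by
    push_cast; ring
  rw [this]
  simpa using Complex.exp_int_mul_two_pi_mul_I k

lemma ee_nat_mul (n : ℕ) (t : ℝ) : ee (n * t) = (ee t) ^ n := by
  rw [ee, ee, ← Complex.exp_nat_mul]; push_cast; ring_nf

lemma dnint_le_half (t : ℝ) : dnint t ≤ 1 / 2 := abs_sub_round t

lemma ee_sub_one_norm (t : ℝ) (h : 0 < dnint t) : 4 * dnint t ≤ ‖ee t - 1‖ := by
  set r : ℝ := t - (round t : ℝ) with hr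
  have htr : t = r + (round t : ℝ) := by ring
  have h1 : ee t = ee r := by
    rw [htr, ee_add, ee_int, mul_one]
  have h2 : ‖ee r - 1‖ = 2 * |Real.sin (Real.pi * r)| := by
    have : ee r = Complex.cos (2 * Real.pi * r) + Complex.sin (2 * Real.pi * r) * Complex.I := by
      rw [ee, show (2 * Real.pi * Complex.I * (r : ℂ)) = ((2 * Real.pi * r : ℝ) : ℂ) * Complex.I by
        push_cast; ring, Complex.exp_mul_I]
      norm_cast
    rw [this]
    have : Complex.cos (2 * Real.pi * r) + Complex.sin (2 * Real.pi * r) * Complex.I - 1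
        = ((Real.cos (2 * Real.pi * r) - 1 : ℝ) : ℂ)
          + ((Real.sin (2 * Real.pi * r) : ℝ) : ℂ) * Complex.I := by
      push_cast; ring
    rw [this]
    rw [Complex.norm_def, Complex.normSq_add_mul_I]
    have key : (Real.cos (2 * Real.pi * r) - 1) ^ 2 + Real.sin (2 * Real.pi * r) ^ 2
        = (2 * |Real.sin (Real.pi * r)|) ^ 2 := by
      have hs : Real.sin (Real.pi * r) ^ 2 = 1 / 2 - Real.cos (2 * (Real.pi * r)) / 2 :=
        Real.sin_sq_eq_half_sub _
      rw [← mul_assoc] at hs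
      have hpyth := Real.sin_sq_add_cos_sq (2 * Real.pi * r)
      have habs : |Real.sin (Real.pi * r)| ^ 2 = Real.sin (Real.pi * r) ^ 2 := sq_abs _
      nlinarith [hs, hpyth, habs]
    rw [key, Real.sqrt_sq (by positivity)]
  rw [h1, h2]
  have hrle : |r| ≤ 1 / 2 := abs_sub_round t
  have hrpos : 0 < |r| := h
  have hπr : Real.pi * |r| ≤ Real.pi := by
    nlinarith [Real.pi_pos, hrle, abs_nonneg r]
  have habs : |Real.sin (Real.pi * r)| = Real.sin (Real.pi * |r|) := by
    rcases le_or_gt 0 r with hr0 | hr0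
    · rw [abs_of_nonneg hr0,
        abs_of_nonneg (Real.sin_nonneg_of_nonneg_of_le_pi (by positivity)
          (by rwa [abs_of_nonneg hr0] at hπr))]
    · rw [abs_of_neg hr0, mul_neg, Real.sin_neg]
      rw [abs_of_nonpos]
      rw [← neg_nonneg, ← Real.sin_neg, ← mul_neg]
      exact Real.sin_nonneg_of_nonneg_of_le_pi (by nlinarith)
        (by rwa [abs_of_neg hr0] at hπr)
  rw [habs]
  have := Real.mul_le_sin (x := Real.pi * |r|) (by positivity)
    (by nlinarith [Real.pi_pos])
  have hπ : (2 / Real.pi) * (Real.pi * |r|) = 2 * |r| := by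
    field_simp
  rw [hπ] at this
  show 4 * |r| ≤ _
  linarith


lemma partial_bound (t : ℝ) (h : 0 < dnint t) (M j : ℕ) :
    ‖∑ n ∈ Finset.Ioc M j, (ee t) ^ n‖ ≤ 1 / (2 * dnint t) := by
  rcases le_or_gt j M with hj | hj
  · rw [Finset.Ioc_eq_empty (by omega), Finset.sum_empty, norm_zero]
    positivity
  · have hne : ee t ≠ 1 := by
      intro hcontra
      have := ee_sub_one_norm t h
      rw [hcontra, sub_self, norm_zero] at this
      nlinarith
    have hIoc : Finset.Ioc M j = Finset.Ico (M + 1) (j + 1) := by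
      ext n; simp [Nat.lt_succ_iff]
    rw [hIoc, geom_sum_Ico hne (by omega)]
    rw [norm_div]
    have h4 : 4 * dnint t ≤ ‖ee t - 1‖ := ee_sub_one_norm t h
    have hnum : ‖(ee t) ^ (j+1) - (ee t) ^ (M+1)‖ ≤ 2 := by
      calc ‖(ee t) ^ (j+1) - (ee t) ^ (M+1)‖ ≤ ‖(ee t) ^ (j+1)‖ + ‖(ee t) ^ (M+1)‖ :=
            norm_sub_le _ _
        _ = 2 := by rw [norm_pow, norm_pow, ee_norm]; norm_num
    have hden : 0 < ‖ee t - 1‖ := by nlinarith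
    calc ‖(ee t) ^ (j+1) - (ee t) ^ (M+1)‖ / ‖ee t - 1‖ ≤ 2 / (4 * dnint t) :=
          div_le_div₀ (by norm_num) hnum (by nlinarith) h4
      _ = 1 / (2 * dnint t) := by rw [div_eq_div_iff] <;> nlinarith

lemma abel_identity (z w : ℕ → ℂ) (M : ℕ) : ∀ N : ℕ,
    ∑ n ∈ Finset.Ioc M N, z n * w n
      = (∑ n ∈ Finset.Ioc M N, (∑ k ∈ Finset.Ioc M n, z k) * (w n - w (n + 1)))
        + (∑ k ∈ Finset.Ioc M N, z k) * w (N + 1) := by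
  intro N
  induction N with
  | zero => simp
  | succ N ih =>
    rcases le_or_gt M N with hMN | hMN
    · rw [Finset.sum_Ioc_succ_top (by omega), Finset.sum_Ioc_succ_top (by omega),
        Finset.sum_Ioc_succ_top (by omega), ih]
      ring
    · rw [show Finset.Ioc M (N+1) = ∅ from Finset.Ioc_eq_empty (by omega)]
      simp

lemma tele (g : ℕ → ℝ) (M : ℕ) : ∀ N, M ≤ N →
    ∑ n ∈ Finset.Ioc M N, (g n - g (n + 1)) = g (M + 1) - g (N + 1) := by
  intro N
  induction N with
  | zero => intro h; interval_cases M; simp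
  | succ N ih =>
    intro h
    rcases le_or_gt M N with hMN | hMN
    · rw [Finset.sum_Ioc_succ_top (by omega), ih hMN]; ring
    · have : M = N + 1 := by omega
      subst this; simp

lemma tail_bound (t : ℝ) (h : 0 < dnint t) (M N : ℕ) (hM : M ≤ N) :
    ‖∑ n ∈ Finset.Ioc M N, ee (n * t) / n‖ ≤ (1 / (2 * dnint t)) / (M + 1) := by
  set B := 1 / (2 * dnint t) with hB
  have hB0 : 0 < B := by positivity
  have hzw : ∀ n ∈ Finset.Ioc M N, ee (n * t) / n = (ee t) ^ n * ((n : ℂ))⁻¹ := by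
    intro n hn
    rw [ee_nat_mul, div_eq_mul_inv]
  rw [Finset.sum_congr rfl hzw, abel_identity (fun n => (ee t)^n) (fun n => ((n:ℂ))⁻¹) M N]
  have hw : ∀ n, M < n → ‖((n:ℂ))⁻¹ - ((n+1:ℕ):ℂ)⁻¹‖ = (n:ℝ)⁻¹ - ((n+1:ℕ):ℝ)⁻¹ := by
    intro n hn
    have hn0 : 0 < n := by omega
    have : ((n:ℂ))⁻¹ - ((n+1:ℕ):ℂ)⁻¹ = (((n:ℝ)⁻¹ - ((n+1:ℕ):ℝ)⁻¹ : ℝ) : ℂ) := by push_cast; ring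
    rw [this, Complex.norm_real, Real.norm_eq_abs, abs_of_nonneg]
    have h1 : (0:ℝ) < n := by exact_mod_cast hn0
    have h2 : (n:ℝ) ≤ ((n+1:ℕ):ℝ) := by push_cast; linarith
    have := inv_anti₀ h1 h2
    linarith
  calc ‖_ + _‖ ≤ ‖∑ n ∈ Finset.Ioc M N, (∑ k ∈ Finset.Ioc M n, (ee t)^k) * (((n:ℂ))⁻¹ - ((n+1:ℕ):ℂ)⁻¹)‖
        + ‖(∑ k ∈ Finset.Ioc M N, (ee t)^k) * (((N+1:ℕ):ℂ))⁻¹‖ := by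
        push_cast
        exact norm_add_le _ _
    _ ≤ (∑ n ∈ Finset.Ioc M N, B * ((n:ℝ)⁻¹ - ((n+1:ℕ):ℝ)⁻¹)) + B * ((N+1:ℕ):ℝ)⁻¹ := by
        gcongr ?_ + ?_
        · refine (norm_sum_le _ _).trans ?_
          apply Finset.sum_le_sum
          intro n hn
          rw [norm_mul, hw n (Finset.mem_Ioc.mp hn).1]
          have := partial_bound t h M n
          have hnn : (0:ℝ) ≤ (n:ℝ)⁻¹ - ((n+1:ℕ):ℝ)⁻¹ := by
            rw [← hw n (Finset.mem_Ioc.mp hn).1]; positivity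
          exact mul_le_mul_of_nonneg_right this hnn
        · rw [norm_mul, norm_inv]
          have : ‖((N+1:ℕ):ℂ)‖ = ((N+1:ℕ):ℝ) := by
            rw [Complex.norm_natCast]
          rw [this]
          exact mul_le_mul_of_nonneg_right (partial_bound t h M N) (by positivity)
    _ = B * ((M+1:ℕ):ℝ)⁻¹ := by
        rw [← Finset.mul_sum]
        have := tele (fun n => ((n:ℝ))⁻¹) M N hM
        push_cast
        push_cast at this
        rw [this]
        ring
    _ ≤ B / (M + 1) := by rw [div_eq_mul_inv]; push_cast; exact le_rfl

lemma head_bound (t : ℝ) (M : ℕ) :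
    ‖∑ n ∈ Finset.Ioc 0 M, ee (n * t) / n‖ ≤ 1 + Real.log M := by
  calc ‖∑ n ∈ Finset.Ioc 0 M, ee (n * t) / n‖ ≤ ∑ n ∈ Finset.Ioc 0 M, (n : ℝ)⁻¹ := by
        refine (norm_sum_le _ _).trans (Finset.sum_le_sum fun n hn => ?_)
        rw [norm_div, ee_norm, Complex.norm_natCast]
        rw [one_div]
    _ = (harmonic M : ℝ) := by
        rw [harmonic_eq_sum_Icc]
        push_cast
        rw [show Finset.Ioc 0 M = Finset.Icc 1 M by rfl]
    _ ≤ 1 + Real.log M := harmonic_le_one_add_log M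

lemma kernel_bound (t : ℝ) (h : 0 < dnint t) (N : ℕ) :
    ‖∑ n ∈ Finset.Icc 1 N, ee (n * t) / n‖ ≤ 2 + Real.log (1 + 1 / (2 * dnint t)) := by
  set B : ℝ := 1 / (2 * dnint t) with hB
  have hB0 : 0 < B := by positivity
  set M : ℕ := min N ⌈B⌉₊ with hM
  have hMN : M ≤ N := min_le_left _ _
  have hsplit : Finset.Icc 1 N = Finset.Ioc 0 N := rfl
  have hsum : ∑ n ∈ Finset.Ioc 0 N, ee (n * t) / n
      = (∑ n ∈ Finset.Ioc 0 M, ee (n * t) / n) + ∑ n ∈ Finset.Ioc M N, ee (n * t) / n :=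
    (Finset.sum_Ioc_consecutive _ (Nat.zero_le M) hMN).symm
  rw [hsplit, hsum]
  have h1 : ‖∑ n ∈ Finset.Ioc 0 M, ee (n * t) / n‖ ≤ 1 + Real.log (1 + B) := by
    refine (head_bound t M).trans ?_
    have hlog : Real.log M ≤ Real.log (1 + B) := by
      rcases Nat.eq_zero_or_pos M with h0 | h0
      · rw [h0]
        simpa using Real.log_nonneg (by linarith)
      · apply Real.log_le_log (by exact_mod_cast h0)
        have : (M : ℝ) ≤ ⌈B⌉₊ := by exact_mod_cast min_le_right N ⌈B⌉₊
        have h2 : (⌈B⌉₊ : ℝ) < B + 1 := Nat.ceil_lt_add_one hB0.le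
        linarith
    linarith
  have h2 : ‖∑ n ∈ Finset.Ioc M N, ee (n * t) / n‖ ≤ 1 := by
    rcases le_or_gt ⌈B⌉₊ N with hc | hc
    · have hMc : M = ⌈B⌉₊ := min_eq_right hc
      refine (tail_bound t h M N hMN).trans ?_
      rw [div_le_one (by positivity)]
      have : B ≤ (⌈B⌉₊ : ℝ) := Nat.le_ceil B
      rw [hMc]
      linarith
    · have hMc : M = N := min_eq_left (by omega)
      rw [hMc, Finset.Ioc_eq_empty (by omega), Finset.sum_empty, norm_zero]
      norm_num
  calc ‖_ + _‖ ≤ ‖∑ n ∈ Finset.Ioc 0 M, ee (n * t) / n‖ + ‖∑ n ∈ Finset.Ioc M N, ee (n * t) / n‖ :=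
        norm_add_le _ _
    _ ≤ (1 + Real.log (1 + B)) + 1 := add_le_add h1 h2
    _ = 2 + Real.log (1 + B) := by ring

-- arithmetic bound
lemma kernel_log_bound (H σ : ℝ) (hH : 0 < H) (hσ : 0 < σ) (z θ : ℝ) (hz : 1 ≤ z)
    (hdio : H * z ^ (-σ) ≤ dnint θ) :
    2 + Real.log (1 + 1 / (2 * dnint θ))
      ≤ ((2 + Real.log (1 + 1 / (2 * H))) / Real.log 2 + σ) * Real.log (1 + z) := by
  have hz0 : 0 < z := by linarith
  have hzσ : 0 < z ^ (-σ) := Real.rpow_pos_of_pos hz0 _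
  have hd0 : 0 < dnint θ := lt_of_lt_of_le (by positivity) hdio
  have hstep1 : 1 / (2 * dnint θ) ≤ z ^ σ / (2 * H) := by
    rw [div_le_div_iff₀ (by positivity) (by positivity)]
    have : z ^ σ * z ^ (-σ) = 1 := by
      rw [← Real.rpow_add hz0]; simp
    nlinarith [Real.rpow_pos_of_pos hz0 σ]
  have hstep2 : 1 + z ^ σ / (2 * H) ≤ (1 + 1 / (2 * H)) * (1 + z) ^ σ := by
    have h1 : (1:ℝ) ≤ (1 + z) ^ σ := Real.one_le_rpow (by linarith) hσ.le
    have h2 : z ^ σ ≤ (1 + z) ^ σ := Real.rpow_le_rpow hz0.le (by linarith) hσ.le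
    have h3 : (0:ℝ) < 2 * H := by positivity
    have expand : (1 + 1 / (2 * H)) * (1 + z) ^ σ = (1 + z) ^ σ + (1 + z) ^ σ / (2 * H) := by
      ring
    rw [expand]
    have h4 : z ^ σ / (2 * H) ≤ (1 + z) ^ σ / (2 * H) :=
      (div_le_div_iff_of_pos_right h3).mpr h2
    linarith
  have hlog2 : Real.log 2 ≤ Real.log (1 + z) := Real.log_le_log (by norm_num) (by linarith)
  have hlog2pos : (0:ℝ) < Real.log 2 := Real.log_pos (by norm_num)
  have hA : (0:ℝ) ≤ 2 + Real.log (1 + 1 / (2 * H)) := by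
    have h5 : (0:ℝ) < 1 / (2 * H) := div_pos one_pos (by linarith)
    have : (0:ℝ) ≤ Real.log (1 + 1 / (2 * H)) := Real.log_nonneg (by linarith)
    linarith
  have hmain : Real.log (1 + 1 / (2 * dnint θ)) ≤ Real.log (1 + 1 / (2 * H)) + σ * Real.log (1 + z) := by
    calc Real.log (1 + 1 / (2 * dnint θ)) ≤ Real.log ((1 + 1 / (2 * H)) * (1 + z) ^ σ) := by
          apply Real.log_le_log (by positivity)
          calc 1 + 1 / (2 * dnint θ) ≤ 1 + z ^ σ / (2 * H) := by linarith
            _ ≤ _ := hstep2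
      _ = Real.log (1 + 1 / (2 * H)) + σ * Real.log (1 + z) := by
          rw [Real.log_mul (by positivity) (by positivity), Real.log_rpow (by linarith)]
  have hfirst : 2 + Real.log (1 + 1 / (2 * H))
      ≤ ((2 + Real.log (1 + 1 / (2 * H))) / Real.log 2) * Real.log (1 + z) := by
    have := mul_le_mul_of_nonneg_left hlog2 (div_nonneg hA hlog2pos.le)
    calc 2 + Real.log (1 + 1 / (2 * H))
        = ((2 + Real.log (1 + 1 / (2 * H))) / Real.log 2) * Real.log 2 := by
          field_simp
      _ ≤ _ := this
  calc 2 + Real.log (1 + 1 / (2 * dnint θ))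
      ≤ 2 + Real.log (1 + 1 / (2 * H)) + σ * Real.log (1 + z) := by linarith
    _ ≤ ((2 + Real.log (1 + 1 / (2 * H))) / Real.log 2) * Real.log (1 + z) + σ * Real.log (1 + z) := by
        linarith
    _ = _ := by ring

lemma ee_cont : Continuous ee := by
  unfold ee
  exact Complex.continuous_exp.comp (by continuity)

lemma integral_Icc_ee (k : ℤ) :
    (∫ t in Set.Icc (0:ℝ) 1, ee (k * t)) = if k = 0 then 1 else 0 := by
  rw [MeasureTheory.integral_Icc_eq_integral_Ioc,
    ← intervalIntegral.integral_of_le (zero_le_one)]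
  rcases eq_or_ne k 0 with hk | hk
  · simp [hk, ee, Complex.exp_zero]
  · have hc : (2 * Real.pi * Complex.I * k : ℂ) ≠ 0 := by
      simp [Real.pi_ne_zero, Complex.I_ne_zero, hk]
    have : ∀ t : ℝ, ee (k * t) = Complex.exp ((2 * Real.pi * Complex.I * k) * t) := by
      intro t; rw [ee]; push_cast; ring_nf
    rw [intervalIntegral.integral_congr (g := fun t : ℝ => Complex.exp ((2 * Real.pi * Complex.I * k) * (t:ℂ))) (fun t _ => this t)]
    rw [integral_exp_mul_complex hc]
    have h1 : Complex.exp (2 * Real.pi * Complex.I * (k:ℂ) * ((1:ℝ):ℂ)) = 1 := by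
      have h := ee_int k
      rw [ee] at h
      rw [show (2 * Real.pi * Complex.I * (k:ℂ) * ((1:ℝ):ℂ))
          = 2 * Real.pi * Complex.I * (((k:ℤ):ℝ):ℂ) by push_cast; ring]
      exact h
    have h0 : Complex.exp (2 * Real.pi * Complex.I * (k:ℂ) * ((0:ℝ):ℂ)) = 1 := by
      norm_num
    rw [if_neg hk, h1, h0, sub_self, zero_div]

lemma integral_cube_ee {d : ℕ} (m : Fin d → ℤ) :
    (∫ x in cube d, ee (∑ i, (m i : ℝ) * x i)) = if m = 0 then 1 else 0 := by
  have hprod : ∀ x : Fin d → ℝ, ee (∑ i, (m i : ℝ) * x i) = ∏ i, ee ((m i : ℝ) * x i) := by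
    intro x
    rw [ee, show (2 * Real.pi * Complex.I * ((∑ i, (m i : ℝ) * x i : ℝ) : ℂ))
        = ∑ i, (2 * Real.pi * Complex.I * (((m i : ℝ) * x i : ℝ) : ℂ)) by push_cast; rw [Finset.mul_sum],
      Complex.exp_sum]
    rfl
  have hcube : MeasurableSet (cube d) := measurableSet_Icc
  rw [show (∫ x in cube d, ee (∑ i, (m i : ℝ) * x i))
      = ∫ x : Fin d → ℝ, Set.indicator (cube d) (fun x => ee (∑ i, (m i : ℝ) * x i)) x from
    (MeasureTheory.integral_indicator hcube).symm]
  have hind : ∀ x : Fin d → ℝ,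
      Set.indicator (cube d) (fun x => ee (∑ i, (m i : ℝ) * x i)) x
        = ∏ i, Set.indicator (Set.Icc (0:ℝ) 1) (fun t => ee ((m i : ℝ) * t)) (x i) := by
    intro x
    by_cases hx : x ∈ cube d
    · rw [Set.indicator_of_mem hx, hprod]
      refine Finset.prod_congr rfl fun i _ => ?_
      rw [Set.indicator_of_mem]
      exact ⟨hx.1 i, hx.2 i⟩
    · rw [Set.indicator_of_notMem hx]
      have : ∃ i, x i ∉ Set.Icc (0:ℝ) 1 := by
        by_contra hcon
        push_neg at hcon
        exact hx ⟨fun i => (hcon i).1, fun i => (hcon i).2⟩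
      obtain ⟨i, hi⟩ := this
      exact (Finset.prod_eq_zero (Finset.mem_univ i) (Set.indicator_of_notMem hi _)).symm
  rw [MeasureTheory.integral_congr_ae (Filter.Eventually.of_forall hind)]
  rw [volume_pi, MeasureTheory.integral_fintype_prod_eq_prod
    (fun i => Set.indicator (Set.Icc (0:ℝ) 1) (fun t => ee ((m i : ℝ) * t)))]
  have : ∀ i, (∫ t : ℝ, Set.indicator (Set.Icc (0:ℝ) 1) (fun t => ee ((m i : ℝ) * t)) t)
      = if m i = 0 then 1 else 0 := by
    intro i
    rw [MeasureTheory.integral_indicator measurableSet_Icc]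
    exact_mod_cast integral_Icc_ee (m i)
  rw [Finset.prod_congr rfl fun i _ => this i]
  by_cases hm : m = 0
  · rw [if_pos hm]
    apply Finset.prod_eq_one
    intro i _
    rw [if_pos (by rw [hm]; rfl)]
  · rw [if_neg hm]
    have : ∃ i, m i ≠ 0 := by
      by_contra hcon
      push_neg at hcon
      exact hm (funext hcon)
    obtain ⟨i, hi⟩ := this
    exact Finset.prod_eq_zero (Finset.mem_univ i) (if_neg hi)

lemma volume_cube (d : ℕ) : volume (cube d) = 1 := by
  rw [cube, ← Set.pi_univ_Icc, volume_pi]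
  rw [MeasureTheory.Measure.pi_pi]
  simp [Real.volume_Icc]

lemma znorm_nonneg {d : ℕ} (m : Fin d → ℤ) : 0 ≤ znorm m := Real.sqrt_nonneg _

lemma znorm_zero {d : ℕ} : znorm (0 : Fin d → ℤ) = 0 := by
  simp [znorm]

lemma one_le_znorm {d : ℕ} {m : Fin d → ℤ} (hm : m ≠ 0) : 1 ≤ znorm m := by
  have : ∃ i, m i ≠ 0 := by
    by_contra hcon
    push_neg at hcon
    exact hm (funext hcon)
  obtain ⟨i, hi⟩ := this
  have h1 : (1:ℝ) ≤ ((m i : ℝ)) ^ 2 := by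
    have : (1:ℤ) ≤ (m i) ^ 2 := by
      rcases lt_or_gt_of_ne hi with h | h <;> nlinarith
    exact_mod_cast this
  have h2 : (1:ℝ) ≤ ∑ j, ((m j : ℝ)) ^ 2 :=
    h1.trans (Finset.single_le_sum (f := fun j => ((m j:ℝ))^2) (fun j _ => sq_nonneg _) (Finset.mem_univ i))
  rw [znorm, show (1:ℝ) = Real.sqrt 1 by simp]
  exact Real.sqrt_le_sqrt h2

lemma harmonic_lower (N : ℕ) :
    Real.log (1 + N) ≤ ∑ n ∈ Finset.Icc 1 N, (1 : ℝ) / n := by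
  have := log_add_one_le_harmonic N
  rw [harmonic_eq_sum_Icc] at this
  push_cast at this
  calc Real.log (1 + N) = Real.log (N + 1) := by ring_nf
    _ ≤ _ := by
      refine this.trans_eq ?_
      refine Finset.sum_congr rfl fun n _ => ?_
      rw [one_div]

lemma ee_nnnorm (t : ℝ) : ‖ee t‖₊ = 1 := by
  ext
  simpa using ee_norm t

lemma integral_f_eq {d : ℕ} (a : (Fin d → ℤ) → ℂ) (f : (Fin d → ℝ) → ℂ)
    (hnorm : Summable fun m => ‖a m‖)
    (hf : ∀ x : Fin d → ℝ, f x = ∑' m : Fin d → ℤ, a m * ee (∑ i, (m i : ℝ) * x i)) :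
    ∫ y in cube d, f y = a 0 := by
  have hstep : ∫ y in cube d, f y
      = ∫ y in cube d, ∑' m : Fin d → ℤ, a m * ee (∑ i, (m i : ℝ) * y i) :=
    MeasureTheory.integral_congr_ae (Filter.Eventually.of_forall fun y => hf y)
  rw [hstep]
  have hmeas : ∀ m : Fin d → ℤ, AEStronglyMeasurable
      (fun y : Fin d → ℝ => a m * ee (∑ i, (m i : ℝ) * y i)) (volume.restrict (cube d)) := by
    intro m
    refine Continuous.aestronglyMeasurable ?_
    exact continuous_const.mul (ee_cont.comp (by continuity))
  have hnn : Summable fun m : Fin d → ℤ => ‖a m‖₊ := by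
    rw [← NNReal.summable_coe]
    simpa [coe_nnnorm] using hnorm
  have hlint : (∑' m : Fin d → ℤ,
      ∫⁻ y, ‖a m * ee (∑ i, (m i : ℝ) * y i)‖₊ ∂(volume.restrict (cube d))) ≠ ⊤ := by
    have heval : ∀ m : Fin d → ℤ,
        (∫⁻ y, ‖a m * ee (∑ i, (m i : ℝ) * y i)‖₊ ∂(volume.restrict (cube d)))
          = (‖a m‖₊ : ℝ≥0∞) := by
      intro m
      have : (fun y : Fin d → ℝ => (‖a m * ee (∑ i, (m i : ℝ) * y i)‖₊ : ℝ≥0∞))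
          = fun _ => (‖a m‖₊ : ℝ≥0∞) := by
        funext y
        rw [nnnorm_mul, ee_nnnorm, mul_one]
      rw [this, MeasureTheory.lintegral_const, Measure.restrict_apply_univ, volume_cube, mul_one]
    rw [tsum_congr heval]
    exact ENNReal.tsum_coe_ne_top_iff_summable.mpr hnn
  rw [MeasureTheory.integral_tsum hmeas hlint]
  have heach : ∀ m : Fin d → ℤ,
      (∫ y in cube d, a m * ee (∑ i, (m i : ℝ) * y i)) = a m * (if m = 0 then 1 else 0) := by
    intro m
    rw [MeasureTheory.integral_const_mul, integral_cube_ee]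
  rw [tsum_congr heach]
  rw [tsum_eq_single 0 (by intro m hm; rw [if_neg hm, mul_zero])]
  rw [if_pos rfl, mul_one]

/-- Theorem 4.2: deterministic estimate for logarithmic means when `α` is not a
Liouville vector. -/
theorem stmt_18 (d : ℕ) (hd : 0 < d)
    (α : Fin d → ℝ) (H σ : ℝ) (hH : 0 < H) (hσ : 0 < σ)
    (hdio : ∀ m : Fin d → ℤ, m ≠ 0 →
      H * znorm m ^ (-σ) ≤ dnint (∑ i, (m i : ℝ) * α i)) :
    ∃ c : ℝ, 0 < c ∧
      ∀ (a : (Fin d → ℤ) → ℂ) (f : (Fin d → ℝ) → ℂ),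
        (Summable fun m => ‖a m‖) →
        (Summable fun m => ‖a m‖ * Real.log (1 + znorm m)) →
        (∀ x : Fin d → ℝ,
          f x = ∑' m : Fin d → ℤ,
            a m * Complex.exp (2 * Real.pi * Complex.I * ((∑ i, (m i : ℝ) * x i : ℝ) : ℂ))) →
        ∀ N : ℕ, 1 ≤ N → ∀ x : Fin d → ℝ,
          ‖logDisc α f N x‖
            ≤ c * (Real.log (1 + N))⁻¹ *
                ∑' m : Fin d → ℤ, ‖a m‖ * Real.log (1 + znorm m) := by
  set c0 : ℝ := (2 + Real.log (1 + 1 / (2 * H))) / Real.log 2 + σ with hc0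
  have hlog2pos : (0:ℝ) < Real.log 2 := Real.log_pos (by norm_num)
  have h2H : (0:ℝ) < 1 / (2 * H) := div_pos one_pos (by linarith)
  have hlogH : (0:ℝ) ≤ Real.log (1 + 1 / (2 * H)) := Real.log_nonneg (by linarith)
  have hc0pos : 0 < c0 := by
    have : (0:ℝ) ≤ (2 + Real.log (1 + 1 / (2 * H))) / Real.log 2 :=
      div_nonneg (by linarith) hlog2pos.le
    rw [hc0]; linarith
  refine ⟨c0, hc0pos, ?_⟩
  intro a f hnorm hlog hf N hN x
  -- notation
  set θ : (Fin d → ℤ) → ℝ := fun m => ∑ i, (m i : ℝ) * α i with hθ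
  set S : ℝ := ∑ n ∈ Finset.Icc 1 N, (1 : ℝ) / n with hS
  have hS1 : (1:ℝ) ≤ S := by
    rw [hS]
    calc (1:ℝ) = 1 / (1:ℕ) := by norm_num
      _ ≤ _ := Finset.single_le_sum (f := fun n : ℕ => (1:ℝ)/n)
          (fun n _ => by positivity) (Finset.mem_Icc.mpr ⟨le_refl 1, hN⟩)
  have hSpos : (0:ℝ) < S := by linarith
  have hSne : ((S:ℝ):ℂ) ≠ 0 := by
    simpa using ne_of_gt hSpos
  set K : (Fin d → ℤ) → ℂ := fun m => ∑ n ∈ Finset.Icc 1 N, ee (n * θ m) / n with hK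
  set F : (Fin d → ℤ) → ℂ := fun m => a m * ee (∑ i, (m i : ℝ) * x i) * K m with hF
  have hKbound : ∀ m, ‖K m‖ ≤ S := by
    intro m
    rw [hK, hS]
    refine (norm_sum_le _ _).trans (Finset.sum_le_sum fun n hn => ?_)
    rw [norm_div, ee_norm, Complex.norm_natCast, one_div]
  -- summability of F
  have hFsummable : Summable F := by
    apply Summable.of_norm
    apply Summable.of_nonneg_of_le (fun m => norm_nonneg _) _ (hnorm.mul_right S)
    intro m
    rw [hF]
    calc ‖a m * ee (∑ i, (m i : ℝ) * x i) * K m‖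
        = ‖a m‖ * ‖K m‖ := by rw [norm_mul, norm_mul, ee_norm, mul_one]
      _ ≤ ‖a m‖ * S := mul_le_mul_of_nonneg_left (hKbound m) (norm_nonneg _)
  -- the sum swap
  have hswap : ∑ n ∈ Finset.Icc 1 N, f (x + (n : ℤ) • α) / (n : ℂ) = ∑' m, F m := by
    have hpoint : ∀ n : ℕ, f (x + (n : ℤ) • α) / (n : ℂ)
        = ∑' m : Fin d → ℤ, (a m * ee (∑ i, (m i : ℝ) * x i) * ee (n * θ m)) / (n : ℂ) := by
      intro n
      rw [hf (x + (n : ℤ) • α), ← tsum_div_const]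
      refine tsum_congr fun m => ?_
      have harg : (∑ i, (m i : ℝ) * (x + (n : ℤ) • α) i)
          = (∑ i, (m i : ℝ) * x i) + n * θ m := by
        simp only [hθ]
        rw [Finset.mul_sum, ← Finset.sum_add_distrib]
        refine Finset.sum_congr rfl fun i _ => ?_
        simp only [Pi.add_apply, Pi.smul_apply, zsmul_eq_mul, Pi.mul_apply, Pi.intCast_apply]
        push_cast
        ring
      show (a m * ee (∑ i, (m i : ℝ) * (x + (n : ℤ) • α) i)) / (n : ℂ) = _
      rw [harg, ee_add, ← mul_assoc]
    have hgsum : ∀ n ∈ Finset.Icc 1 N, Summable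
        (fun m : Fin d → ℤ => (a m * ee (∑ i, (m i : ℝ) * x i) * ee (n * θ m)) / (n : ℂ)) := by
      intro n hn
      apply Summable.of_norm
      have : (fun m : Fin d → ℤ => ‖(a m * ee (∑ i, (m i : ℝ) * x i) * ee (n * θ m)) / (n : ℂ)‖)
          = fun m => ‖a m‖ * (1 / (n : ℝ)) := by
        funext m
        rw [norm_div, norm_mul, norm_mul, ee_norm, ee_norm, Complex.norm_natCast]
        ring
      rw [this]
      exact hnorm.mul_right _
    rw [Finset.sum_congr rfl (fun n _ => hpoint n), ← Summable.tsum_finsetSum hgsum]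
    refine tsum_congr fun m => ?_
    simp only [hF, hK]
    rw [Finset.mul_sum]
    refine Finset.sum_congr rfl fun n _ => ?_
    rw [mul_div_assoc]
  -- value at zero
  have hF0 : F 0 = a 0 * ((S:ℝ):ℂ) := by
    have h2 : θ 0 = 0 := by simp [hθ]
    have hee0 : ee 0 = 1 := by simp [ee]
    simp only [hF, hK, h2, mul_zero, hee0, Pi.zero_apply, Int.cast_zero, zero_mul,
      Finset.sum_const_zero, mul_one, hS]
    push_cast
    rfl
  -- the discrepancy formula
  have hdisc : logDisc α f N x = ((S:ℝ):ℂ)⁻¹ * ∑' m, ite (m = 0) 0 (F m) := by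
    rw [logDisc, integral_f_eq a f hnorm hf, hswap, ← hS]
    rw [hFsummable.tsum_eq_add_tsum_ite 0, hF0]
    field_simp
    ring
  rw [hdisc]
  -- term bound
  have hterm : ∀ m : Fin d → ℤ, ‖ite (m = 0) 0 (F m)‖
      ≤ c0 * (‖a m‖ * Real.log (1 + znorm m)) := by
    intro m
    by_cases hm : m = 0
    · rw [if_pos hm, norm_zero, hm, znorm_zero]
      simp
    · rw [if_neg hm, hF]
      have hz1 : 1 ≤ znorm m := one_le_znorm hm
      have hd0 : 0 < dnint (θ m) := by
        refine lt_of_lt_of_le ?_ (hdio m hm)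
        have : (0:ℝ) < znorm m ^ (-σ) := Real.rpow_pos_of_pos (by linarith) _
        positivity
      have hKb : ‖K m‖ ≤ c0 * Real.log (1 + znorm m) := by
        refine (kernel_bound (θ m) hd0 N).trans ?_
        rw [hc0]
        exact kernel_log_bound H σ hH hσ (znorm m) (θ m) hz1 (hdio m hm)
      calc ‖a m * ee (∑ i, (m i : ℝ) * x i) * K m‖
          = ‖a m‖ * ‖K m‖ := by rw [norm_mul, norm_mul, ee_norm, mul_one]
        _ ≤ ‖a m‖ * (c0 * Real.log (1 + znorm m)) :=
            mul_le_mul_of_nonneg_left hKb (norm_nonneg _)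
        _ = c0 * (‖a m‖ * Real.log (1 + znorm m)) := by ring
  have hRHSsummable : Summable (fun m : Fin d → ℤ => c0 * (‖a m‖ * Real.log (1 + znorm m))) :=
    hlog.mul_left c0
  have hitesummable : Summable (fun m : Fin d → ℤ => ‖ite (m = 0) 0 (F m)‖) :=
    Summable.of_nonneg_of_le (fun m => norm_nonneg _) hterm hRHSsummable
  have hT : ‖∑' m, ite (m = 0) 0 (F m)‖ ≤ c0 * ∑' m, ‖a m‖ * Real.log (1 + znorm m) := by
    calc ‖∑' m, ite (m = 0) 0 (F m)‖ ≤ ∑' m, ‖ite (m = 0) 0 (F m)‖ :=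
          norm_tsum_le_tsum_norm hitesummable
      _ ≤ ∑' m, c0 * (‖a m‖ * Real.log (1 + znorm m)) :=
          Summable.tsum_le_tsum hterm hitesummable hRHSsummable
      _ = c0 * ∑' m, ‖a m‖ * Real.log (1 + znorm m) := tsum_mul_left
  have hSignn : (0:ℝ) ≤ ∑' m : Fin d → ℤ, ‖a m‖ * Real.log (1 + znorm m) :=
    tsum_nonneg fun m => mul_nonneg (norm_nonneg _) (Real.log_nonneg (by linarith [znorm_nonneg m]))
  have hlogN : (0:ℝ) < Real.log (1 + N) := by
    apply Real.log_pos
    have : (1:ℝ) ≤ (N:ℝ) := by exact_mod_cast hN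
    linarith
  have hSN : Real.log (1 + N) ≤ S := by rw [hS]; exact harmonic_lower N
  rw [norm_mul, norm_inv, Complex.norm_real, Real.norm_eq_abs, abs_of_pos hSpos]
  calc S⁻¹ * ‖∑' m, ite (m = 0) 0 (F m)‖
      ≤ S⁻¹ * (c0 * ∑' m, ‖a m‖ * Real.log (1 + znorm m)) := by
        exact mul_le_mul_of_nonneg_left hT (by positivity)
    _ ≤ (Real.log (1 + N))⁻¹ * (c0 * ∑' m, ‖a m‖ * Real.log (1 + znorm m)) := by
        apply mul_le_mul_of_nonneg_right _ (by positivity)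
        exact inv_anti₀ hlogN hSN
    _ = c0 * (Real.log (1 + N))⁻¹ * ∑' m, ‖a m‖ * Real.log (1 + znorm m) := by ring
end
end
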